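/- arXiv:1209.0446 — 5 statements merged into one kernel-verified Lean document; each statement's English description precedes it below -/
import Mathlib

section
/- Consider a sextic of the form f = a_2 X^4Y^2 + a_3 X^3Y^3 + a_4 X^2Y^4 + a_5 XY^5 over a field of characteristic ≠ 2,3,5. If -8a_2a_4 + 3a_3^2 = 3r^2, 960a_2^2a_3a_5 + 256a_2^2a_4^2 - 432a_2a_4a_3^2 + 81a_3^4 = 81r^4, and 40a_2^2a_3^3a_5 + 8a_2^2a_3^2a_4^2 - 8a_2a_3^4a_4 + 24a_2^3a_4^3 + 100a_2^4a_5^2 - 140a_2^3a_4a_3a_5 + a_3^6 = r^6, then (a_3^2 - r^2)^3 (a_3^2 - 9r^2) = 0. -/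
/-- The elimination step for sextics with a triple root: the three invariant equations
imply `(a₃² - r²)³ (a₃² - 9r²) = 0`. -/
theorem triple_root_elimination
    (k : Type*) [Field k]
    (h2 : (2 : k) ≠ 0) (h3 : (3 : k) ≠ 0) (h5 : (5 : k) ≠ 0)
    (a2 a3 a4 a5 r : k)
    (e2 : -8 * a2 * a4 + 3 * a3^2 = 3 * r^2)
    (e4 : 960 * a2^2 * a3 * a5 + 256 * a2^2 * a4^2 - 432 * a2 * a4 * a3^2 + 81 * a3^4
        = 81 * r^4)
    (e6 : 40 * a2^2 * a3^3 * a5 + 8 * a2^2 * a3^2 * a4^2 - 8 * a2 * a3^4 * a4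
        + 24 * a2^3 * a4^3 + 100 * a2^4 * a5^2 - 140 * a2^3 * a4 * a3 * a5 + a3^6
        = r^6) :
    (a3^2 - r^2)^3 * (a3^2 - 9 * r^2) = 0 := by
  set s : k := a3^2 - r^2 with hs
  have hA : 960 * a2^2 * a3 * a5 = 45 * s^2 := by
    rw [hs]
    linear_combination e4 + (32*a2*a4 - 42*a3^2 - 12*r^2) * e2
  have hB : 192000 * a2^4 * a5^2 = 375 * s^3 := by
    rw [hs]
    linear_combination 1920 * e6
      - (240*a3^2*((-8*a2*a4+3*a3^2-3*r^2) - 6*(a3^2-r^2)) + 1920*a3^4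
         - 90*((-8*a2*a4+3*a3^2-3*r^2)^2 - 9*(a3^2-r^2)*(-8*a2*a4+3*a3^2-3*r^2)
               + 27*(a3^2-r^2)^2)
         + 525*((64*a2^2*a3*a5 - 3*(a3^2-r^2)^2) + 3*(a3^2-r^2)^2)) * e2
      - (80*a3^2 - 105*(a3^2-r^2)) * hA
  have H : (375 : k) * ((a3^2 - r^2)^3 * (a3^2 - 9 * r^2)) = 0 := by
    rw [← hs] at *
    linear_combination (25*(64*a2^2*a3*a5 - 3*s^2) - 3200*a2^2*a3*a5) * hA
      + 8*a3^2 * hB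
  have h375 : (375 : k) ≠ 0 := by
    have : (375 : k) = 3 * 5^3 := by norm_num
    rw [this]
    exact mul_ne_zero h3 (pow_ne_zero _ h5)
  exact (mul_eq_zero.mp H).resolve_left h375
end

section
/- Consider a sextic f = a_2 X^4Y^2 + a_3 X^3Y^3 + a_4 X^2Y^4 + a_5 XY^5 over a field of characteristic ≠ 2,3,5. If a_2 a_4 = (3/8) a_3^2 and a_2^2 a_3 a_5 = (3/64) a_3^4 and the degree-6 invariant relation 40a_2^2a_3^3a_5 + 8a_2^2a_3^2a_4^2 - 8a_2a_3^4a_4 + 24a_2^3a_4^3 + 100a_2^4a_5^2 - 140a_2^3a_4a_3a_5 + a_3^6 = 0 holds, then a_2 a_3 = 0; consequently f has a root of multiplicity at least four at (1,0) or (0,1). -/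
/-- The key computation showing that vanishing of `I₂, I₄, I₆, I₁₀` forces a root of
multiplicity at least 4: on the reduced sextic
`a₂X⁴Y² + a₃X³Y³ + a₄X²Y⁴ + a₅XY⁵` the three relations force `a₂ a₃ = 0`, and hence a
quadruple root at `(1,0)` or at `(0,1)`. -/
theorem quadruple_root_computation
    (k : Type*) [Field k]
    (h2 : (2 : k) ≠ 0) (h3 : (3 : k) ≠ 0) (h5 : (5 : k) ≠ 0)
    (a2 a3 a4 a5 : k)
    (e2 : a2 * a4 = 3 / 8 * a3^2)
    (e4 : a2^2 * a3 * a5 = 3 / 64 * a3^4)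
    (e6 : 40 * a2^2 * a3^3 * a5 + 8 * a2^2 * a3^2 * a4^2 - 8 * a2 * a3^4 * a4
        + 24 * a2^3 * a4^3 + 100 * a2^4 * a5^2 - 140 * a2^3 * a4 * a3 * a5 + a3^6 = 0) :
    a2 * a3 = 0 ∧ ((a3 = 0 ∧ a4 = 0 ∧ a5 = 0) ∨ (a2 = 0 ∧ a3 = 0)) := by
  have h8 : (8 : k) ≠ 0 := by
    have : (8 : k) = 2^3 := by norm_num
    rw [this]; exact pow_ne_zero _ h2
  have h64 : (64 : k) ≠ 0 := by
    have : (64 : k) = 2^6 := by norm_num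
    rw [this]; exact pow_ne_zero _ h2
  have h25 : (25 : k) ≠ 0 := by
    have : (25 : k) = 5^2 := by norm_num
    rw [this]; exact pow_ne_zero _ h5
  have h100 : (100 : k) ≠ 0 := by
    have : (100 : k) = 2^2 * 5^2 := by norm_num
    rw [this]; exact mul_ne_zero (pow_ne_zero _ h2) (pow_ne_zero _ h5)
  -- clear denominators
  have e2' : 8 * (a2 * a4) = 3 * a3^2 := by rw [e2]; field_simp
  have e4' : 64 * (a2^2 * a3 * a5) = 3 * a3^4 := by rw [e4]; field_simp
  have ha3 : a2 = 0 ∨ a3 = 0 := by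
    by_contra h
    push_neg at h
    obtain ⟨ha2, ha3⟩ := h
    have key : 25 * (a2^4 * a3^8) = 0 := by
      linear_combination (1024 : k) * a2^4 * a3^2 * e6
        - (2176 * a2^5 * a3^4 * a4 - 208 * a2^4 * a3^6
            + 3072 * a2^6 * a3^2 * a4^2 - 17920 * a2^6 * a3^3 * a5) * e2'
        - (-125 * a2^4 * a3^4 + 1600 * a2^6 * a3 * a5) * e4'
    have : a2^4 * a3^8 = 0 := (mul_eq_zero.mp key).resolve_left h25
    rcases mul_eq_zero.mp this with h' | h'
    · exact ha2 (pow_eq_zero_iff (n := 4) (by norm_num) |>.mp h')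
    · exact ha3 (pow_eq_zero_iff (n := 8) (by norm_num) |>.mp h')
  rcases ha3 with ha2 | ha3
  · have ha3 : a3 = 0 := by
      have h' := e2'
      rw [ha2, zero_mul, mul_zero] at h'
      have := (mul_eq_zero.mp h'.symm).resolve_left h3
      exact pow_eq_zero_iff (n := 2) (by norm_num) |>.mp this
    exact ⟨by rw [ha2, zero_mul], Or.inr ⟨ha2, ha3⟩⟩
  · by_cases ha2 : a2 = 0
    · exact ⟨by rw [ha2, zero_mul], Or.inr ⟨ha2, ha3⟩⟩
    · have ha4 : a4 = 0 := by
        have h' := e2'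
        rw [ha3] at h'
        have h'' : 8 * (a2 * a4) = 0 := by rw [h']; ring
        have := (mul_eq_zero.mp h'').resolve_left h8
        exact (mul_eq_zero.mp this).resolve_left ha2
      have ha5 : a5 = 0 := by
        have h' := e6
        rw [ha3, ha4] at h'
        have h'' : 100 * a2^4 * a5^2 = 0 := by linear_combination h'
        have h1 := (mul_eq_zero.mp h'').resolve_left
          (mul_ne_zero h100 (pow_ne_zero _ ha2))
        exact pow_eq_zero_iff (n := 2) (by norm_num) |>.mp h1
      exact ⟨by rw [ha3, mul_zero], Or.inl ⟨ha3, ha4, ha5⟩⟩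
end

section
/- The ring R = k[U_1, ..., U_8], where U_1 = I_2^5/I_10, U_2 = I_2^3 I_4/I_10, U_3 = I_2^2 I_6/I_10, U_4 = I_4^5/I_10^2, U_5 = I_4 I_6/I_10, U_6 = I_6^5/I_10^3, U_7 = I_2 I_4^2/I_10, U_8 = I_2 I_6^3/I_10^2, is integrally closed in its field of fractions. -/
open MvPolynomial

/-- The `k`-algebra generated by the absolute invariants `U₁, …, U₈`. -/
noncomputable def Uring (k F : Type*) [Field k] [Field F] [Algebra k F]
    (I2 I4 I6 I10 : F) : Subalgebra k F :=
  Algebra.adjoin k ({I2^5 / I10, I2^3 * I4 / I10, I2^2 * I6 / I10, I4^5 / I10^2,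
    I4 * I6 / I10, I6^5 / I10^3, I2 * I4^2 / I10, I2 * I6^3 / I10^2} : Set F)

namespace UAux

/-- The weights of the variables. -/
def wt : Fin 4 → ℕ := ![1, 2, 3, 5]

lemma wt_weight (d : Fin 4 →₀ ℕ) :
    (Finsupp.weight wt d : ℕ) = d 0 + 2 * d 1 + 3 * d 2 + 5 * d 3 := by
  rw [Finsupp.weight_apply, Finsupp.sum_fintype _ _ (fun i => by simp)]
  simp [Fin.sum_univ_four, wt, mul_comm]

variable {k : Type*} [Field k]

lemma homog_X_pow (i : Fin 4) (n : ℕ) :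
    IsWeightedHomogeneous wt ((X i : MvPolynomial (Fin 4) k) ^ n) (n * wt i) := by
  rw [X_pow_eq_monomial]
  apply isWeightedHomogeneous_monomial
  rw [wt_weight]
  fin_cases i <;> simp [Finsupp.single_apply, wt] <;> ring

lemma homog_mono (a b c d : ℕ) :
    IsWeightedHomogeneous wt
      ((X 0 : MvPolynomial (Fin 4) k)^a * X 1^b * X 2^c * X 3^d)
      (a + 2*b + 3*c + 5*d) := by
  have h := (((homog_X_pow (k := k) 0 a).mul (homog_X_pow 1 b)).mul
      (homog_X_pow 2 c)).mul (homog_X_pow 3 d)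
  have hw : a * wt 0 + b * wt 1 + c * wt 2 + d * wt 3 = a + 2*b + 3*c + 5*d := by
    simp [wt]; ring
  rwa [hw] at h

lemma comp_mul (g p : MvPolynomial (Fin 4) k) (m : ℕ)
    (hg : IsWeightedHomogeneous wt g m) (n : ℕ) :
    (weightedHomogeneousComponent wt n p) * g
      = weightedHomogeneousComponent wt (n + m) (p * g) := by
  induction p using MvPolynomial.induction_on' with
  | monomial d r =>
    by_cases h : Finsupp.weight wt d = n
    · rw [(isWeightedHomogeneous_monomial wt d r h).weightedHomogeneousComponent_same,
        ((isWeightedHomogeneous_monomial wt d r h).mul hg).weightedHomogeneousComponent_same]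
    · rw [(isWeightedHomogeneous_monomial wt d r rfl).weightedHomogeneousComponent_ne n
        (fun hn => h hn.symm),
        ((isWeightedHomogeneous_monomial wt d r rfl).mul hg).weightedHomogeneousComponent_ne
        (n + m) (by omega), zero_mul]
  | add p q hp hq =>
    rw [map_add, add_mul, add_mul, map_add, hp, hq]

lemma homog_of_mul {g p : MvPolynomial (Fin 4) k} {m n : ℕ}
    (hg : IsWeightedHomogeneous wt g m) (hgne : g ≠ 0)
    (hh : IsWeightedHomogeneous wt (p * g) (n + m)) :
    IsWeightedHomogeneous wt p n := by
  have hcomp : ∀ n', n' ≠ n → weightedHomogeneousComponent wt n' p = 0 := by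
    intro n' hne
    have h := comp_mul g p m hg n'
    rw [hh.weightedHomogeneousComponent_ne (n' + m) (by omega)] at h
    exact (mul_eq_zero.mp h).resolve_right hgne
  have hp : p = weightedHomogeneousComponent wt n p := by
    conv_lhs => rw [← sum_weightedHomogeneousComponent wt p]
    exact finsum_eq_single _ n hcomp
  rw [hp]
  exact weightedHomogeneousComponent_isWeightedHomogeneous n p

variable {F : Type*} [Field F] [Algebra k F] {I2 I4 I6 I10 : F}

lemma elsplit (h10 : I10 ≠ 0) {a1 b1 c1 a2 b2 c2 : ℕ} (h1 : 5 ∣ a1+2*b1+3*c1)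
    (h2 : 5 ∣ a2+2*b2+3*c2) :
    I2^(a1+a2) * I4^(b1+b2) * I6^(c1+c2) / I10^(((a1+a2)+2*(b1+b2)+3*(c1+c2))/5)
      = (I2^a1*I4^b1*I6^c1 / I10^((a1+2*b1+3*c1)/5)) *
        (I2^a2*I4^b2*I6^c2 / I10^((a2+2*b2+3*c2)/5)) := by
  obtain ⟨m1, hm1⟩ := h1
  obtain ⟨m2, hm2⟩ := h2
  rw [show ((a1+a2)+2*(b1+b2)+3*(c1+c2))/5 = m1 + m2 by omega,
    show (a1+2*b1+3*c1)/5 = m1 by omega, show (a2+2*b2+3*c2)/5 = m2 by omega,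
    pow_add, pow_add, pow_add, pow_add, div_mul_div_comm]
  ring

lemma elmem (h10 : I10 ≠ 0) : ∀ N a b c : ℕ, a+b+c ≤ N → 5 ∣ a+2*b+3*c →
    I2^a * I4^b * I6^c / I10^((a+2*b+3*c)/5) ∈ Uring k F I2 I4 I6 I10 := by
  intro N
  induction N with
  | zero =>
    intro a b c hle _
    obtain ⟨rfl, rfl, rfl⟩ : a = 0 ∧ b = 0 ∧ c = 0 := by omega
    norm_num
  | succ N ih =>
    intro a b c hle hdvd
    have base : ∀ a' b' c' : ℕ, 5 ∣ a'+2*b'+3*c' →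
        I2^a' * I4^b' * I6^c' / I10^((a'+2*b'+3*c')/5) ∈ Uring k F I2 I4 I6 I10 →
        a' ≤ a → b' ≤ b → c' ≤ c →
        I2^(a-a') * I4^(b-b') * I6^(c-c') / I10^(((a-a')+2*(b-b')+3*(c-c'))/5)
          ∈ Uring k F I2 I4 I6 I10 →
        I2^a * I4^b * I6^c / I10^((a+2*b+3*c)/5) ∈ Uring k F I2 I4 I6 I10 := by
      intro a' b' c' hd' hmem ha hb hc hmem2
      have h : a = a' + (a-a') ∧ b = b' + (b-b') ∧ c = c' + (c-c') := by omega
      rw [h.1, h.2.1, h.2.2, elsplit h10 hd' (by omega)]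
      exact mul_mem hmem hmem2
    have gen : ∀ x ∈ ({I2^5 / I10, I2^3 * I4 / I10, I2^2 * I6 / I10, I4^5 / I10^2,
        I4 * I6 / I10, I6^5 / I10^3, I2 * I4^2 / I10, I2 * I6^3 / I10^2} : Set F),
        x ∈ Uring k F I2 I4 I6 I10 := fun x hx => Algebra.subset_adjoin hx
    by_cases h1 : 5 ≤ a
    · refine base 5 0 0 (by omega) ?_ (by omega) (by omega) (by omega)
        (ih (a-5) (b-0) (c-0) (by omega) (by omega))
      · norm_num; exact gen _ (by left; rfl)
    by_cases h2 : 5 ≤ b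
    · refine base 0 5 0 (by omega) ?_ (by omega) (by omega) (by omega)
        (ih (a-0) (b-5) (c-0) (by omega) (by omega))
      · norm_num; exact gen _ (by right; right; right; left; rfl)
    by_cases h3 : 5 ≤ c
    · refine base 0 0 5 (by omega) ?_ (by omega) (by omega) (by omega)
        (ih (a-0) (b-0) (c-5) (by omega) (by omega))
      · norm_num; exact gen _ (by right; right; right; right; right; left; rfl)
    by_cases h4 : 1 ≤ b ∧ 1 ≤ c
    · refine base 0 1 1 (by omega) ?_ (by omega) (by omega) (by omega)
        (ih (a-0) (b-1) (c-1) (by omega) (by omega))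
      · norm_num; exact gen _ (by right; right; right; right; left; rfl)
    by_cases h5 : 3 ≤ a ∧ 1 ≤ b
    · refine base 3 1 0 (by omega) ?_ (by omega) (by omega) (by omega)
        (ih (a-3) (b-1) (c-0) (by omega) (by omega))
      · norm_num; exact gen _ (by right; left; rfl)
    by_cases h6 : 1 ≤ a ∧ 2 ≤ b
    · refine base 1 2 0 (by omega) ?_ (by omega) (by omega) (by omega)
        (ih (a-1) (b-2) (c-0) (by omega) (by omega))
      · norm_num; exact gen _ (by right; right; right; right; right; right; left; rfl)
    by_cases h7 : 2 ≤ a ∧ 1 ≤ c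
    · refine base 2 0 1 (by omega) ?_ (by omega) (by omega) (by omega)
        (ih (a-2) (b-0) (c-1) (by omega) (by omega))
      · norm_num; exact gen _ (by right; right; left; rfl)
    by_cases h8 : 1 ≤ a ∧ 3 ≤ c
    · refine base 1 0 3 (by omega) ?_ (by omega) (by omega) (by omega)
        (ih (a-1) (b-0) (c-3) (by omega) (by omega))
      · norm_num; exact gen _ (by right; right; right; right; right; right; right; rfl)
    · obtain ⟨rfl, rfl, rfl⟩ : a = 0 ∧ b = 0 ∧ c = 0 := by
        rcases Nat.lt_or_ge b 1 with hb | hb <;> rcases Nat.lt_or_ge c 1 with hc | hc <;>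
          rcases Nat.lt_or_ge a 1 with ha | ha <;> omega
      norm_num

lemma aeval_mono (a b c d : ℕ) :
    aeval ![I2,I4,I6,I10] ((X 0 : MvPolynomial (Fin 4) k)^a * X 1^b * X 2^c * X 3^d)
      = I2^a * I4^b * I6^c * I10^d := by
  simp [map_pow]

lemma aeval_X3 : aeval ![I2,I4,I6,I10] (X 3 : MvPolynomial (Fin 4) k) = I10 := by
  simp

lemma H1 (h10 : I10 ≠ 0) {s : F} (hs : s ∈ Uring k F I2 I4 I6 I10) :
    ∃ (e : ℕ) (q : MvPolynomial (Fin 4) k), IsWeightedHomogeneous wt q (5 * e) ∧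
      s * I10 ^ e = aeval ![I2,I4,I6,I10] q := by
  induction hs using Algebra.adjoin_induction with
  | mem x hx =>
    have mk : ∀ a b c e : ℕ, a + 2*b + 3*c + 5*0 = 5*e → x * I10^e = I2^a * I4^b * I6^c * I10^0 →
        ∃ (e : ℕ) (q : MvPolynomial (Fin 4) k), IsWeightedHomogeneous wt q (5 * e) ∧
          x * I10 ^ e = aeval ![I2,I4,I6,I10] q :=
      fun a b c e hw heq => ⟨e, X 0^a * X 1^b * X 2^c * X 3^0,
        hw ▸ homog_mono a b c 0, by rw [aeval_mono]; exact heq⟩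
    simp only [Set.mem_insert_iff, Set.mem_singleton_iff] at hx
    rcases hx with rfl | rfl | rfl | rfl | rfl | rfl | rfl | rfl
    · exact mk 5 0 0 1 (by norm_num) (by field_simp)
    · exact mk 3 1 0 1 (by norm_num) (by field_simp)
    · exact mk 2 0 1 1 (by norm_num) (by field_simp)
    · exact mk 0 5 0 2 (by norm_num) (by field_simp)
    · exact mk 0 1 1 1 (by norm_num) (by field_simp)
    · exact mk 0 0 5 3 (by norm_num) (by field_simp)
    · exact mk 1 2 0 1 (by norm_num) (by field_simp)
    · exact mk 1 0 3 2 (by norm_num) (by field_simp)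
  | algebraMap r =>
    refine ⟨0, C r, ?_, by simp⟩
    simpa using isWeightedHomogeneous_C wt (σ := Fin 4) r
  | add x y hx hy ihx ihy =>
    obtain ⟨e, q, hq, hxe⟩ := ihx
    obtain ⟨f, r, hr, hyf⟩ := ihy
    refine ⟨e + f, q * X 3 ^ f + r * X 3 ^ e, ?_, ?_⟩
    · have h1 : IsWeightedHomogeneous wt (q * (X 3:MvPolynomial (Fin 4) k) ^ f) (5*(e+f)) := by
        have h := hq.mul (homog_X_pow 3 f)
        have hw : 5 * e + f * wt 3 = 5 * (e + f) := by simp [wt]; ring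
        rwa [hw] at h
      have h2 : IsWeightedHomogeneous wt (r * (X 3:MvPolynomial (Fin 4) k) ^ e) (5*(e+f)) := by
        have h := hr.mul (homog_X_pow 3 e)
        have hw : 5 * f + e * wt 3 = 5 * (e + f) := by simp [wt]; ring
        rwa [hw] at h
      exact h1.add h2
    · rw [map_add, map_mul, map_mul, map_pow, map_pow, aeval_X3, ← hxe, ← hyf, pow_add]
      ring
  | mul x y hx hy ihx ihy =>
    obtain ⟨e, q, hq, hxe⟩ := ihx
    obtain ⟨f, r, hr, hyf⟩ := ihy
    refine ⟨e + f, q * r, ?_, ?_⟩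
    · have h := hq.mul hr
      rwa [show 5*e + 5*f = 5*(e+f) by ring] at h
    · rw [map_mul, ← hxe, ← hyf, pow_add]
      ring

lemma H2 (h10 : I10 ≠ 0) {q : MvPolynomial (Fin 4) k} {e : ℕ}
    (hq : IsWeightedHomogeneous wt q (5 * e)) :
    aeval ![I2,I4,I6,I10] q / I10 ^ e ∈ Uring k F I2 I4 I6 I10 := by
  rw [q.as_sum, map_sum, Finset.sum_div]
  refine Subalgebra.sum_mem _ (fun d hd => ?_)
  have hw : d 0 + 2*d 1 + 3*d 2 + 5*d 3 = 5*e := by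
    rw [← wt_weight]; exact hq (mem_support_iff.mp hd)
  rw [aeval_monomial, Finsupp.prod_pow]
  have hprod : (∏ i, (![I2,I4,I6,I10]) i ^ d i) = I2^(d 0) * I4^(d 1) * I6^(d 2) * I10^(d 3) := by
    rw [Fin.prod_univ_four]
    norm_num
    rfl
  rw [hprod]
  have hf : d 3 ≤ e := by omega
  have he : e - d 3 = (d 0 + 2*d 1 + 3*d 2)/5 := by omega
  have key : algebraMap k F (coeff d q) * (I2^(d 0) * I4^(d 1) * I6^(d 2) * I10^(d 3)) / I10^e
      = algebraMap k F (coeff d q) *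
        (I2^(d 0) * I4^(d 1) * I6^(d 2) / I10^((d 0 + 2*d 1 + 3*d 2)/5)) := by
    rw [← he, pow_sub₀ _ h10 hf]
    field_simp
  rw [key]
  exact mul_mem (Subalgebra.algebraMap_mem _ _)
    (elmem h10 (d 0 + d 1 + d 2) (d 0) (d 1) (d 2) le_rfl (by omega))

end UAux

open UAux Polynomial in
set_option maxHeartbeats 1000000 in
set_option synthInstance.maxHeartbeats 400000 in
/-- The ring `R = k[U₁, …, U₈]` of absolute invariants is integrally closed in its
field of fractions. -/
theorem U_algebra_integrally_closed
    (k F : Type*) [Field k] [Field F] [Algebra k F]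
    (I2 I4 I6 I10 : F)
    (hind : AlgebraicIndependent k ![I2, I4, I6, I10]) :
    ∀ u : F,
      (∃ s₁ ∈ Uring k F I2 I4 I6 I10, ∃ s₂ ∈ Uring k F I2 I4 I6 I10,
         s₂ ≠ 0 ∧ u * s₂ = s₁) →
      IsIntegral (Uring k F I2 I4 I6 I10) u →
      u ∈ Uring k F I2 I4 I6 I10 := by
  intro u hfrac hint
  classical
  set P := MvPolynomial (Fin 4) k with hP
  let φ : P →ₐ[k] F := MvPolynomial.aeval ![I2, I4, I6, I10]
  have hinj : Function.Injective φ := algebraicIndependent_iff_injective_aeval.mp hind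
  have h10 : I10 ≠ 0 := by
    intro h
    refine MvPolynomial.X_ne_zero (σ := Fin 4) (R := k) 3 (hinj ?_)
    rw [map_zero]
    show MvPolynomial.aeval ![I2, I4, I6, I10] (MvPolynomial.X 3) = 0
    rw [aeval_X3, h]
  -- the fraction data
  obtain ⟨s1, hs1U, s2, hs2U, hs2ne, hus⟩ := hfrac
  obtain ⟨a1, p1, hp1h, hp1⟩ := H1 h10 hs1U
  obtain ⟨a2, p2, hp2h, hp2⟩ := H1 h10 hs2U
  have hφp2 : φ p2 ≠ 0 := by
    rw [← hp2]
    exact mul_ne_zero hs2ne (pow_ne_zero _ h10)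
  have hp2ne : p2 ≠ 0 := by
    intro h
    exact hφp2 (by rw [h, map_zero])
  -- the integral equation
  obtain ⟨f, hmonic, heval⟩ := hint
  set n := f.natDegree with hn
  have hn1 : 1 ≤ n := by
    by_contra h
    have h0 : n = 0 := by omega
    have : f = 1 := (Polynomial.Monic.natDegree_eq_zero hmonic).mp h0
    rw [this, Polynomial.eval₂_one] at heval
    exact one_ne_zero heval
  have hsum : ∑ i ∈ Finset.range (n+1),
      (algebraMap (Uring k F I2 I4 I6 I10) F) (f.coeff i) * u ^ i = 0 := by
    rw [← Polynomial.eval₂_eq_sum_range]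
    exact heval
  choose e p' hhom heq using fun i : ℕ => H1 h10 (f.coeff i).2
  set M := ∑ i ∈ Finset.range (n+1), e i with hMdef
  have hM : ∀ i ≤ n, e i ≤ M :=
    fun i hi => Finset.single_le_sum (fun j _ => Nat.zero_le (e j))
      (Finset.mem_range.mpr (by omega))
  set m : ℕ → P := fun i => if i = n then 1 else p' i * MvPolynomial.X 3 ^ (M*(n-i) - e i)
    with hmdef
  have hm : ∀ i ∈ Finset.range (n+1),
      (algebraMap (Uring k F I2 I4 I6 I10) F) (f.coeff i) * I10^(M*(n-i)) = φ (m i) := by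
    intro i hi
    rcases eq_or_ne i n with rfl | hne
    · simp only [hmdef, if_pos rfl, map_one]
      rw [hmonic.coeff_natDegree, Nat.sub_self, Nat.mul_zero, pow_zero, map_one, one_mul]
    · have hilt : i < n := by
        have := Finset.mem_range.mp hi; omega
      have hle : e i ≤ M * (n - i) := by
        calc e i ≤ M := hM i (by omega)
        _ = M * 1 := by ring
        _ ≤ M * (n - i) := Nat.mul_le_mul_left M (by omega)
      simp only [hmdef, if_neg hne]
      rw [map_mul, map_pow]
      show (↑(f.coeff i) : F) * I10^(M*(n-i)) = φ (p' i) *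
        (MvPolynomial.aeval ![I2, I4, I6, I10] (MvPolynomial.X 3)) ^ (M*(n-i) - e i)
      rw [aeval_X3, ← heq i,
        show I10 ^ (M*(n-i)) = I10 ^ (e i) * I10 ^ (M*(n-i) - e i) by
          rw [← pow_add]; congr 1; omega]
      ring
  -- key equation in F
  have hkey : ∑ i ∈ Finset.range (n+1), φ (m i) * (u * I10^M)^i = 0 := by
    have hterm : ∀ i ∈ Finset.range (n+1), φ (m i) * (u * I10^M)^i
        = ((algebraMap (Uring k F I2 I4 I6 I10) F) (f.coeff i) * u^i) * I10^(M*n) := by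
      intro i hi
      have hiln : i ≤ n := by have := Finset.mem_range.mp hi; omega
      rw [← hm i hi, mul_pow, ← pow_mul,
        show M*n = M*(n-i) + M*i by rw [← Nat.mul_add]; congr 1; omega, pow_add]
      ring
    rw [Finset.sum_congr rfl hterm, ← Finset.sum_mul, hsum, zero_mul]
  -- move to the fraction field of P
  let K := FractionRing P
  let ι : K →+* F := IsFractionRing.lift (g := (φ : P →+* F)) hinj
  have hι : ∀ p : P, ι (algebraMap P K p) = φ p := fun p => IsFractionRing.lift_algebraMap hinj p
  have ιinj : Function.Injective ι := ι.injective
  set z : K := algebraMap P K (p1 * MvPolynomial.X 3 ^ (a2+M)) /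
      algebraMap P K (p2 * MvPolynomial.X 3 ^ a1) with hzdef
  have hden : φ (p2 * MvPolynomial.X 3 ^ a1) ≠ 0 := by
    rw [map_mul, map_pow]
    show φ p2 * (MvPolynomial.aeval ![I2, I4, I6, I10] (MvPolynomial.X 3)) ^ a1 ≠ 0
    rw [aeval_X3]
    exact mul_ne_zero hφp2 (pow_ne_zero _ h10)
  have hveq : (u * I10^M) * φ (p2 * MvPolynomial.X 3 ^ a1)
      = φ (p1 * MvPolynomial.X 3 ^ (a2+M)) := by
    rw [map_mul, map_pow, map_mul, map_pow]
    show (u * I10^M) * (φ p2 * (MvPolynomial.aeval ![I2, I4, I6, I10] (MvPolynomial.X 3)) ^ a1)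
      = φ p1 * (MvPolynomial.aeval ![I2, I4, I6, I10] (MvPolynomial.X 3)) ^ (a2+M)
    rw [aeval_X3, ← hp1, ← hp2, ← hus, pow_add]
    ring
  have hvz : ι z = u * I10^M := by
    rw [hzdef, map_div₀, hι, hι, div_eq_iff hden, hveq]
  -- z is integral over P
  have hW : ∑ i ∈ Finset.range (n+1), algebraMap P K (m i) * z^i = 0 := by
    apply ιinj
    rw [map_sum, map_zero]
    rw [show (0:F) = ∑ i ∈ Finset.range (n+1), φ (m i) * (u * I10^M)^i from hkey.symm]
    refine Finset.sum_congr rfl (fun i _ => ?_)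
    rw [map_mul, map_pow, hι, hvz]
  have hz : IsIntegral P z := by
    refine ⟨Polynomial.X^n + ∑ i ∈ Finset.range n, Polynomial.C (m i) * Polynomial.X^i, ?_, ?_⟩
    · have hdeg : (∑ i ∈ Finset.range n, Polynomial.C (m i) * Polynomial.X^i : P[X]).degree
          < (n : WithBot ℕ) := by
        refine lt_of_le_of_lt (Polynomial.degree_sum_le _ _) ?_
        rw [Finset.sup_lt_iff (by exact_mod_cast WithBot.bot_lt_coe n)]
        intro i hi
        refine lt_of_le_of_lt (Polynomial.degree_C_mul_X_pow_le _ _) ?_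
        exact_mod_cast Finset.mem_range.mp hi
      exact Polynomial.monic_X_pow_add hdeg
    · rw [Polynomial.eval₂_add, Polynomial.eval₂_pow, Polynomial.eval₂_X]
      rw [Polynomial.eval₂_finset_sum]
      have hsplit : ∑ i ∈ Finset.range (n+1), algebraMap P K (m i) * z^i
          = (∑ i ∈ Finset.range n, algebraMap P K (m i) * z^i) + algebraMap P K (m n) * z^n := by
        rw [Finset.sum_range_succ]
      rw [hW] at hsplit
      have hmn : m n = 1 := by simp [hmdef]
      rw [hmn, map_one, one_mul] at hsplit
      have : ∑ i ∈ Finset.range n, Polynomial.eval₂ (algebraMap P K) z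
          (Polynomial.C (m i) * Polynomial.X ^ i)
          = ∑ i ∈ Finset.range n, algebraMap P K (m i) * z^i := by
        refine Finset.sum_congr rfl (fun i _ => ?_)
        rw [Polynomial.eval₂_mul, Polynomial.eval₂_C, Polynomial.eval₂_pow, Polynomial.eval₂_X]
      rw [this]
      linear_combination hsplit.symm
  obtain ⟨y, hy⟩ := IsIntegrallyClosed.isIntegral_iff.mp hz
  have huy : u * I10^M = φ y := by
    rw [← hvz, ← hy, hι]
  -- homogeneity of y
  have hPeq : y * (p2 * MvPolynomial.X 3 ^ a1) = p1 * MvPolynomial.X 3 ^ (a2+M) := by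
    apply hinj
    rw [map_mul, ← huy]
    exact hveq
  have hg : IsWeightedHomogeneous wt (p2 * MvPolynomial.X 3 ^ a1 : P) (5*(a2+a1)) := by
    have h := hp2h.mul (homog_X_pow 3 a1)
    have hw : 5 * a2 + a1 * wt 3 = 5 * (a2 + a1) := by simp [wt]; ring
    rwa [hw] at h
  have hh : IsWeightedHomogeneous wt (p1 * MvPolynomial.X 3 ^ (a2+M) : P)
      (5*M + 5*(a2+a1)) := by
    have h := hp1h.mul (homog_X_pow 3 (a2+M))
    have hw : 5 * a1 + (a2+M) * wt 3 = 5*M + 5*(a2+a1) := by simp [wt]; ring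
    rwa [hw] at h
  have hgne : (p2 * MvPolynomial.X 3 ^ a1 : P) ≠ 0 :=
    mul_ne_zero hp2ne (pow_ne_zero _ (MvPolynomial.X_ne_zero _))
  have hyhom : IsWeightedHomogeneous wt y (5*M) := by
    refine homog_of_mul hg hgne ?_
    rwa [← hPeq] at hh
  -- conclude
  have : u = φ y / I10^M := by
    rw [eq_div_iff (pow_ne_zero M h10), huy]
  rw [this]
  exact H2 h10 hyhom
end

section
/- Let f, g be binary cubics over an algebraically closed field k of characteristic ≠ 2,3. Then fg = 0 or the sextic fg has a root of multiplicity at least 4 if and only if the four invariants D, R, H, I all vanish on the pair (f,g), where D = D_f D_g is the product of discriminants, R is the resultant of f and g, H is the value of the skew-symmetric SL_2-invariant bilinear form on V_3 at (f,g), and I = I_2(fg) is the quadratic invariant of the product sextic. -/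
open MvPolynomial
noncomputable section

/-- The binary form of degree `d` with coefficient vector `a`. -/
def toForm (k : Type*) [CommSemiring k] (d : ℕ) (a : Fin (d+1) → k) :
    MvPolynomial (Fin 2) k :=
  ∑ i : Fin (d+1), C (a i) * X 0 ^ (d - (i : ℕ)) * X 1 ^ (i : ℕ)

/-- Coordinate change by the matrix `g` : `X ↦ g00 X + g01 Y`, `Y ↦ g10 X + g11 Y`. -/
def matAct (k : Type*) [CommSemiring k] (g : Matrix (Fin 2) (Fin 2) k)
    (p : MvPolynomial (Fin 2) k) : MvPolynomial (Fin 2) k :=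
  aeval (fun j : Fin 2 => C (g j 0) * X 0 + C (g j 1) * X 1) p

/-- The coefficient of `X^(d-i) Y^i` in a binary form of degree `d`. -/
def formCoeff (k : Type*) [CommSemiring k] (d : ℕ) (p : MvPolynomial (Fin 2) k)
    (i : Fin (d+1)) : k :=
  coeff (Finsupp.single 0 (d - (i : ℕ)) + Finsupp.single 1 (i : ℕ)) p

/-- The induced action of a `2×2` matrix on the coefficient vector of a binary form. -/
def actCoeff (k : Type*) [CommSemiring k] (d : ℕ) (g : Matrix (Fin 2) (Fin 2) k)
    (a : Fin (d+1) → k) : Fin (d+1) → k :=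
  formCoeff k d (matAct k g (toForm k d a))

/-- `P ∈ k[A_0,…,A_d]` is an `SL₂(k)`-invariant. -/
def SL2Invariant (k : Type*) [CommRing k] (d : ℕ)
    (P : MvPolynomial (Fin (d+1)) k) : Prop :=
  ∀ g : Matrix.SpecialLinearGroup (Fin 2) k, ∀ a : Fin (d+1) → k,
    eval (actCoeff k d (g : Matrix (Fin 2) (Fin 2) k) a) P = eval a P

/-- The ring `R_d` of `SL₂(k)`-invariants in `k[A_0,…,A_d]`. -/
def Rd (k : Type*) [Field k] (d : ℕ) : Subalgebra k (MvPolynomial (Fin (d+1)) k) where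
  carrier := {P | SL2Invariant k d P}
  mul_mem' := fun hP hQ g a => by simp only [map_mul]; rw [hP g a, hQ g a]
  add_mem' := fun hP hQ g a => by simp only [map_add]; rw [hP g a, hQ g a]
  algebraMap_mem' := fun r g a => by simp [SL2Invariant]
/-- The skew-symmetric `SL₂`-invariant pairing `H` on pairs of binary cubics. -/
def Hc {A : Type*} [CommRing A] (a b : Fin 4 → A) : A :=
  3 * a 0 * b 3 - a 1 * b 2 + a 2 * b 1 - 3 * a 3 * b 0

/-- The discriminant of a binary cubic. -/
def discCubic {A : Type*} [CommRing A] (a : Fin 4 → A) : A :=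
  -27 * a 0^2 * a 3^2 + 18 * a 0 * a 3 * a 2 * a 1 + a 1^2 * a 2^2
    - 4 * a 1^3 * a 3 - 4 * a 2^3 * a 0

/-- `D = D_f D_g`, the product of the discriminants of the two cubics. -/
def Dc {A : Type*} [CommRing A] (a b : Fin 4 → A) : A :=
  discCubic a * discCubic b

/-- The resultant `R` of two binary cubics. -/
def Rc {A : Type*} [CommRing A] (a b : Fin 4 → A) : A :=
  3*b 0^2*a 0*b 3*a 3^2 - b 0^3*a 3^3 + 2*b 0^2*a 3^2*b 2*a 1 - b 2^2*b 0*a 1^2*a 3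
  - a 0^2*b 2^3*a 3 + b 0^2*a 2*b 1*a 3^2 - b 0^2*a 2^2*b 2*a 3 - b 1^2*b 0*a 1*a 3^2
  + a 0*b 1^3*a 3^2 - 3*b 0*a 0^2*b 3^2*a 3 - b 0*a 1^3*b 3^2 + a 0^3*b 3^3
  + b 0^2*a 2^3*b 3 - b 0*a 0*b 3*b 2*a 1*a 3 + 3*a 0^2*b 3*b 2*b 1*a 3
  + b 0*a 3*b 3*a 0*b 1*a 2 + 3*b 0*a 0*b 3^2*a 1*a 2 - 2*a 0^2*b 3^2*b 1*a 2
  - 3*b 0*a 3^2*b 2*a 0*b 1 - 3*b 0^2*a 3*b 3*a 1*a 2 - b 2*a 1*a 0^2*b 3^2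
  + b 2^2*a 1*a 0*b 1*a 3 + b 2*b 0*a 1^2*b 3*a 2 - b 2*a 1*b 3*a 0*b 1*a 2
  + a 0^2*b 2^2*a 2*b 3 + 2*b 0*a 0*b 2^2*a 2*a 3 - 2*b 0*a 0*b 2*b 3*a 2^2
  - 2*b 1^2*a 1*a 3*a 0*b 3 + b 1*a 1^2*b 3^2*a 0 + 2*b 1*b 0*a 1^2*b 3*a 3
  + b 1*b 0*a 1*b 2*a 2*a 3 - b 1*b 0*a 1*b 3*a 2^2 - a 0*b 1^2*b 2*a 2*a 3
  + a 0*b 1^2*b 3*a 2^2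

/-- The quadratic invariant `I = I₂(fg)` of the product sextic of two binary cubics. -/
def Ic {A : Type*} [CommRing A] (a b : Fin 4 → A) : A :=
  228*a 0*b 0*a 3*b 3 - 52*a 1*b 0*a 3*b 2 - 24*a 1*b 0*a 2*b 3 - 24*a 0*b 1*a 3*b 2
  - 52*a 0*b 1*a 2*b 3 + 4*a 2*b 0*a 3*b 1 + 16*a 2^2*b 0*b 2 + 16*a 1*b 1^2*a 3
  + 4*a 1*b 1*a 2*b 2 + 16*a 1^2*b 1*b 3 + 16*a 0*b 2^2*a 2 + 4*a 0*b 2*a 1*b 3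
  - 6*a 3^2*b 0^2 - 6*a 2^2*b 1^2 - 6*a 1^2*b 2^2 - 6*a 0^2*b 3^2
set_option linter.unusedSectionVars false

namespace CubicAux

variable {k : Type*} [Field k]

theorem toForm3_expand (a : Fin 4 → k) :
    toForm k 3 a = C (a 0) * X 0 ^ 3 + C (a 1) * X 0 ^ 2 * X 1
      + C (a 2) * X 0 * X 1 ^ 2 + C (a 3) * X 1 ^ 3 := by
  rw [toForm, Fin.sum_univ_four]
  simp only [show ((0:Fin 4):ℕ) = 0 from rfl, show ((1:Fin 4):ℕ) = 1 from rfl,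
    show ((2:Fin 4):ℕ) = 2 from rfl, show ((3:Fin 4):ℕ) = 3 from rfl]
  norm_num

theorem toForm6_expand (c : Fin 7 → k) :
    toForm k 6 c = C (c 0) * X 0 ^ 6 + C (c 1) * X 0 ^ 5 * X 1
      + C (c 2) * X 0 ^ 4 * X 1 ^ 2 + C (c 3) * X 0 ^ 3 * X 1 ^ 3
      + C (c 4) * X 0 ^ 2 * X 1 ^ 4 + C (c 5) * X 0 * X 1 ^ 5 + C (c 6) * X 1 ^ 6 := by
  rw [toForm, Fin.sum_univ_seven]
  simp only [show ((0:Fin 7):ℕ) = 0 from rfl, show ((1:Fin 7):ℕ) = 1 from rfl,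
    show ((2:Fin 7):ℕ) = 2 from rfl, show ((3:Fin 7):ℕ) = 3 from rfl,
    show ((4:Fin 7):ℕ) = 4 from rfl, show ((5:Fin 7):ℕ) = 5 from rfl,
    show ((6:Fin 7):ℕ) = 6 from rfl]
  norm_num

theorem coeff_toForm {d : ℕ} (c : Fin (d+1) → k) (i : Fin (d+1)) :
    coeff (Finsupp.single 0 (d - (i:ℕ)) + Finsupp.single 1 (i:ℕ)) (toForm k d c) = c i := by
  rw [toForm]
  have key : ∀ j : Fin (d+1), C (c j) * (X 0:MvPolynomial (Fin 2) k) ^ (d - (j:ℕ)) * X 1 ^ (j:ℕ)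
      = monomial (Finsupp.single 0 (d - (j:ℕ)) + Finsupp.single 1 (j:ℕ)) (c j) := by
    intro j
    rw [C_apply, X_pow_eq_monomial, X_pow_eq_monomial, monomial_mul, monomial_mul]
    simp
  simp only [key]
  rw [coeff_sum]
  rw [Finset.sum_eq_single i]
  · rw [coeff_monomial, if_pos rfl]
  · intro j _ hj
    rw [coeff_monomial, if_neg]
    intro h
    apply hj
    have := congrArg (fun f => f 1) h
    simp only [Finsupp.add_apply, Finsupp.single_apply] at this
    norm_num at this
    exact Fin.ext this
  · intro h; exact absurd (Finset.mem_univ i) h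

theorem toForm3_zero {a : Fin 4 → k} (h : toForm k 3 a = 0) : ∀ i, a i = 0 := by
  intro i
  have := coeff_toForm (d := 3) a i
  rw [h, coeff_zero] at this
  exact this.symm

theorem toForm3_zero_of (a : Fin 4 → k) (h : ∀ i, a i = 0) : toForm k 3 a = 0 := by
  rw [toForm3_expand]; simp [h]

theorem coeff_X1pow_mul (Q : MvPolynomial (Fin 2) k) (m : Fin 2 →₀ ℕ) (hm : m 1 < 4) :
    coeff m ((X 1) ^ 4 * Q) = 0 := by
  rw [coeff_mul]
  apply Finset.sum_eq_zero
  rintro ⟨p, q⟩ hpq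
  rw [Finset.HasAntidiagonal.mem_antidiagonal] at hpq
  rw [coeff_X_pow]
  by_cases h : Finsupp.single 1 4 = p
  · exfalso
    have : m 1 = p 1 + q 1 := by rw [← hpq]; simp
    rw [← h] at this
    simp [Finsupp.single_apply] at this
    omega
  · rw [if_neg h, zero_mul]

/-- convolution coefficients of the product sextic -/
def cvv (a b : Fin 4 → k) : Fin 7 → k :=
  ![a 0*b 0, a 0*b 1+a 1*b 0, a 0*b 2+a 1*b 1+a 2*b 0, a 0*b 3+a 1*b 2+a 2*b 1+a 3*b 0,
    a 1*b 3+a 2*b 2+a 3*b 1, a 2*b 3+a 3*b 2, a 3*b 3]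

theorem prod_toForm (a b : Fin 4 → k) :
    toForm k 3 a * toForm k 3 b = toForm k 6 (cvv a b) := by
  rw [toForm3_expand, toForm3_expand, toForm6_expand]
  rw [show cvv a b 0 = a 0*b 0 from rfl, show cvv a b 1 = a 0*b 1+a 1*b 0 from rfl,
    show cvv a b 2 = a 0*b 2+a 1*b 1+a 2*b 0 from rfl,
    show cvv a b 3 = a 0*b 3+a 1*b 2+a 2*b 1+a 3*b 0 from rfl,
    show cvv a b 4 = a 1*b 3+a 2*b 2+a 3*b 1 from rfl,
    show cvv a b 5 = a 2*b 3+a 3*b 2 from rfl, show cvv a b 6 = a 3*b 3 from rfl]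
  simp only [C_add, C_mul]
  ring

theorem conv_zero (a b : Fin 4 → k)
    (hdvd : (X 1 : MvPolynomial (Fin 2) k) ^ 4 ∣ toForm k 3 a * toForm k 3 b) :
    a 0*b 0 = 0 ∧ a 0*b 1+a 1*b 0 = 0 ∧ a 0*b 2+a 1*b 1+a 2*b 0 = 0
      ∧ a 0*b 3+a 1*b 2+a 2*b 1+a 3*b 0 = 0 := by
  obtain ⟨Q, hQ⟩ := hdvd
  have hp : toForm k 6 (cvv a b) = X 1 ^ 4 * Q := by rw [← prod_toForm, hQ]
  have key : ∀ i : Fin 7, (i:ℕ) < 4 → cvv a b i = 0 := by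
    intro i hi
    have h1 := coeff_toForm (d := 6) (cvv a b) i
    rw [hp] at h1
    rw [← h1]
    apply coeff_X1pow_mul
    simpa [Finsupp.add_apply, Finsupp.single_apply] using hi
  refine ⟨?_, ?_, ?_, ?_⟩
  · have := key 0 (by decide); simpa [cvv] using this
  · have := key 1 (by decide); simpa [cvv] using this
  · have := key 2 (by decide); simpa [cvv] using this
  · have := key 3 (by decide); simpa [cvv] using this

/-- coefficient action of the substitution X ↦ αX+βY, Y ↦ γX+δY on cubics -/
def actG (α β γ δ : k) (a : Fin 4 → k) : Fin 4 → k :=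
  ![a 0*α^3 + a 1*α^2*γ + a 2*α*γ^2 + a 3*γ^3,
    3*a 0*α^2*β + a 1*(α^2*δ + 2*α*β*γ) + a 2*(2*α*γ*δ + β*γ^2) + 3*a 3*γ^2*δ,
    3*a 0*α*β^2 + a 1*(2*α*β*δ + β^2*γ) + a 2*(α*δ^2 + 2*β*γ*δ) + 3*a 3*γ*δ^2,
    a 0*β^3 + a 1*β^2*δ + a 2*β*δ^2 + a 3*δ^3]

theorem compat (α β γ δ : k) (a : Fin 4 → k) :
    aeval ![C α * X 0 + C β * X 1, C γ * X 0 + C δ * X 1] (toForm k 3 a)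
      = toForm k 3 (actG α β γ δ a) := by
  rw [toForm3_expand, toForm3_expand]
  simp only [actG, Matrix.cons_val_zero, Matrix.cons_val_one, Matrix.head_cons,
    Matrix.cons_val_two, Matrix.tail_cons, Matrix.cons_val_three,
    map_add, map_mul, map_pow, aeval_X, aeval_C, algHom_C, algebraMap_eq, C_add, C_mul,
    C_pow, map_ofNat]
  ring

theorem invH (u v : k) (a b : Fin 4 → k) :
    Hc (actG u (-1) v 0 a) (actG u (-1) v 0 b) = v^3 * Hc a b := by
  simp only [Hc, actG, Matrix.cons_val_zero, Matrix.cons_val_one, Matrix.head_cons,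
    Matrix.cons_val_two, Matrix.tail_cons, Matrix.cons_val_three]
  ring

theorem invD (u v : k) (a b : Fin 4 → k) :
    Dc (actG u (-1) v 0 a) (actG u (-1) v 0 b) = v^12 * Dc a b := by
  simp only [Dc, discCubic, actG, Matrix.cons_val_zero, Matrix.cons_val_one, Matrix.head_cons,
    Matrix.cons_val_two, Matrix.tail_cons, Matrix.cons_val_three]
  ring

theorem invR (u v : k) (a b : Fin 4 → k) :
    Rc (actG u (-1) v 0 a) (actG u (-1) v 0 b) = v^9 * Rc a b := by
  simp only [Rc, actG, Matrix.cons_val_zero, Matrix.cons_val_one, Matrix.head_cons,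
    Matrix.cons_val_two, Matrix.tail_cons, Matrix.cons_val_three]
  ring

theorem invI (u v : k) (a b : Fin 4 → k) :
    Ic (actG u (-1) v 0 a) (actG u (-1) v 0 b) = v^6 * Ic a b := by
  simp only [Ic, actG, Matrix.cons_val_zero, Matrix.cons_val_one, Matrix.head_cons,
    Matrix.cons_val_two, Matrix.tail_cons, Matrix.cons_val_three]
  ring

theorem funext4 {f g : Fin 4 → k} (h0 : f 0 = g 0) (h1 : f 1 = g 1) (h2 : f 2 = g 2)
    (h3 : f 3 = g 3) : f = g := by
  funext i
  fin_cases i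
  · exact h0
  · exact h1
  · exact h2
  · exact h3

theorem actG_comp (α β γ δ α₂ β₂ γ₂ δ₂ : k) (a : Fin 4 → k) :
    actG α₂ β₂ γ₂ δ₂ (actG α β γ δ a)
      = actG (α*α₂+β*γ₂) (α*β₂+β*δ₂) (γ*α₂+δ*γ₂) (γ*β₂+δ*δ₂) a := by
  apply funext4 <;>
    (simp only [actG, Matrix.cons_val_zero, Matrix.cons_val_one, Matrix.head_cons,
      Matrix.cons_val_two, Matrix.tail_cons, Matrix.cons_val_three]; ring)

theorem actG_id (a : Fin 4 → k) : actG 1 0 0 1 a = a := by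
  apply funext4 <;>
    (simp only [actG, Matrix.cons_val_zero, Matrix.cons_val_one, Matrix.head_cons,
      Matrix.cons_val_two, Matrix.tail_cons, Matrix.cons_val_three]; ring)

theorem actG_inv (u v : k) (hv : v ≠ 0) (a : Fin 4 → k) :
    actG 0 v⁻¹ (-1) (u*v⁻¹) (actG u (-1) v 0 a) = a := by
  rw [actG_comp, show u*0+(-1)*(-1) = (1:k) by ring, show u*v⁻¹ + (-1)*(u*v⁻¹) = (0:k) by ring,
    show v*0+0*(-1) = (0:k) by ring, show v*v⁻¹ + 0*(u*v⁻¹) = (1:k) by field_simp; ring]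
  exact actG_id a

theorem Dc_swap (a b : Fin 4 → k) : Dc a b = Dc b a := by
  simp only [Dc, discCubic]; ring
theorem Rc_swap (a b : Fin 4 → k) : Rc a b = -Rc b a := by
  simp only [Rc]; ring
theorem Hc_swap (a b : Fin 4 → k) : Hc a b = -Hc b a := by
  simp only [Hc]; ring
theorem Ic_swap (a b : Fin 4 → k) : Ic a b = Ic b a := by
  simp only [Ic]; ring

theorem core_fwd_aux (a b : Fin 4 → k) (ha0 : a 0 = 0)
    (hc1 : a 0*b 1 + a 1*b 0 = 0) (hc2 : a 0*b 2 + a 1*b 1 + a 2*b 0 = 0)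
    (hc3 : a 0*b 3 + a 1*b 2 + a 2*b 1 + a 3*b 0 = 0) :
    Dc a b = 0 ∧ Rc a b = 0 ∧ Hc a b = 0 ∧ Ic a b = 0 := by
  have h1 : a 1 * b 0 = 0 := by linear_combination hc1 - b 1*ha0
  rcases mul_eq_zero.mp h1 with ha1 | hb0
  · have h2' : a 2 * b 0 = 0 := by linear_combination hc2 - b 2*ha0 - b 1*ha1
    rcases mul_eq_zero.mp h2' with ha2 | hb0
    · have h3' : a 3 * b 0 = 0 := by linear_combination hc3 - b 3*ha0 - b 2*ha1 - b 1*ha2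
      rcases mul_eq_zero.mp h3' with ha3 | hb0
      · refine ⟨?_,?_,?_,?_⟩ <;> (simp only [Dc, discCubic, Rc, Hc, Ic, ha0, ha1, ha2, ha3]; ring)
      · refine ⟨?_,?_,?_,?_⟩ <;> (simp only [Dc, discCubic, Rc, Hc, Ic, ha0, ha1, ha2, hb0]; ring)
    · have h3' : a 2 * b 1 = 0 := by linear_combination hc3 - b 3*ha0 - b 2*ha1 - a 3*hb0
      rcases mul_eq_zero.mp h3' with ha2 | hb1
      · refine ⟨?_,?_,?_,?_⟩ <;> (simp only [Dc, discCubic, Rc, Hc, Ic, ha0, ha1, ha2, hb0]; ring)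
      · refine ⟨?_,?_,?_,?_⟩ <;> (simp only [Dc, discCubic, Rc, Hc, Ic, ha0, ha1, hb0, hb1]; ring)
  · have h2' : a 1 * b 1 = 0 := by linear_combination hc2 - b 2*ha0 - a 2*hb0
    rcases mul_eq_zero.mp h2' with ha1 | hb1
    · have h3' : a 2 * b 1 = 0 := by linear_combination hc3 - b 3*ha0 - b 2*ha1 - a 3*hb0
      rcases mul_eq_zero.mp h3' with ha2 | hb1
      · refine ⟨?_,?_,?_,?_⟩ <;> (simp only [Dc, discCubic, Rc, Hc, Ic, ha0, ha1, ha2, hb0]; ring)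
      · refine ⟨?_,?_,?_,?_⟩ <;> (simp only [Dc, discCubic, Rc, Hc, Ic, ha0, ha1, hb0, hb1]; ring)
    · have h3' : a 1 * b 2 = 0 := by linear_combination hc3 - b 3*ha0 - a 2*hb1 - a 3*hb0
      rcases mul_eq_zero.mp h3' with ha1 | hb2
      · have h4' : a 2 * b 1 = 0 := by linear_combination hc3 - b 3*ha0 - b 2*ha1 - a 3*hb0
        rcases mul_eq_zero.mp h4' with ha2 | hb1'
        · refine ⟨?_,?_,?_,?_⟩ <;> (simp only [Dc, discCubic, Rc, Hc, Ic, ha0, ha1, ha2, hb0]; ring)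
        · refine ⟨?_,?_,?_,?_⟩ <;> (simp only [Dc, discCubic, Rc, Hc, Ic, ha0, ha1, hb0, hb1']; ring)
      · refine ⟨?_,?_,?_,?_⟩ <;> (simp only [Dc, discCubic, Rc, Hc, Ic, ha0, hb0, hb1, hb2]; ring)

theorem core_fwd (a b : Fin 4 → k) (hc0 : a 0*b 0 = 0)
    (hc1 : a 0*b 1 + a 1*b 0 = 0) (hc2 : a 0*b 2 + a 1*b 1 + a 2*b 0 = 0)
    (hc3 : a 0*b 3 + a 1*b 2 + a 2*b 1 + a 3*b 0 = 0) :
    Dc a b = 0 ∧ Rc a b = 0 ∧ Hc a b = 0 ∧ Ic a b = 0 := by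
  rcases mul_eq_zero.mp hc0 with ha0 | hb0
  · exact core_fwd_aux a b ha0 hc1 hc2 hc3
  · obtain ⟨hd, hr, hh, hi⟩ := core_fwd_aux b a hb0 (by linear_combination hc1)
      (by linear_combination hc2) (by linear_combination hc3)
    exact ⟨by rw [Dc_swap, hd], by rw [Rc_swap, hr, neg_zero],
      by rw [Hc_swap, hh, neg_zero], by rw [Ic_swap, hi]⟩
theorem L1 (hk2 : (2:k) ≠ 0) (hk3 : (3:k) ≠ 0) (a : Fin 4 → k) (hd : discCubic a = 0) :
    ∃ u v s t : k, ¬(u = 0 ∧ v = 0) ∧ a 0 = v^2*s ∧ a 1 = v^2*t - 2*u*v*s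
      ∧ a 2 = u^2*s - 2*u*v*t ∧ a 3 = u^2*t := by
  have hd' : -27*a 0^2*a 3^2 + 18*a 0*a 3*a 2*a 1 + a 1^2*a 2^2 - 4*a 1^3*a 3 - 4*a 2^3*a 0 = 0 := hd
  by_cases h0 : a 0 = 0
  · by_cases h1 : a 1 = 0
    · exact ⟨1, 0, a 2, a 3, by simp, by rw [h0]; ring, by rw [h1]; ring, by ring, by ring⟩
    · have hq2 : a 2^2 = 4*a 1*a 3 := by
        have hq : a 1^2*(a 2^2 - 4*a 1*a 3) = 0 := by
          linear_combination hd' + (27*a 0*a 3^2 - 18*a 3*a 2*a 1 + 4*a 2^3)*h0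
        have := (mul_eq_zero.mp hq).resolve_left (pow_ne_zero 2 h1)
        linear_combination this
      set u : k := -(a 2)/(2*a 1) with hu_def
      have hu3 : 2*a 1*u = -(a 2) := by rw [hu_def]; field_simp; try ring
      refine ⟨u, 1, 0, a 1, by simp, by rw [h0]; ring, by ring, by linear_combination hu3, ?_⟩
      · have key : 4*a 1^2*(a 3 - u^2*a 1) = 0 := by
          linear_combination (-2*a 1^2*u + a 1*a 2)*hu3 + (-(a 1))*hq2
        have h4 : (4:k)*a 1^2 ≠ 0 := by
          have h4' : (4:k) = 2^2 := by norm_num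
          exact mul_ne_zero (h4' ▸ pow_ne_zero 2 hk2) (pow_ne_zero 2 h1)
        have := (mul_eq_zero.mp key).resolve_left h4
        linear_combination this
  · by_cases hP : a 1^2 - 3*a 0*a 2 = 0
    · have h33 : 27*a 0^2*a 3 = a 1^3 := by
        have hsq : (27*a 0^2*a 3 - a 1^3)^2 = 0 := by
          linear_combination (-27*a 0^2)*hd' + (a 1^4 + 3*a 0*a 1^2*a 2 + 36*a 0^2*a 2^2
            - 162*a 0^2*a 1*a 3)*hP
        have := pow_eq_zero_iff (n := 2) (by norm_num) |>.mp hsq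
        linear_combination this
      set u : k := -(a 1)/(3*a 0) with hu_def
      have hu : 3*a 0*u = -(a 1) := by rw [hu_def]; field_simp; try ring
      have h9 : (9:k)*a 0^2 ≠ 0 := by
        have h9' : (9:k) = 3^2 := by norm_num
        exact mul_ne_zero (h9' ▸ pow_ne_zero 2 hk3) (pow_ne_zero 2 h0)
      refine ⟨u, 1, a 0, a 1 + 2*u*a 0, by simp, by ring, by ring, ?_, ?_⟩
      · have key : 9*a 0^2*(a 2 - (u^2*a 0 - 2*u*1*(a 1 + 2*u*a 0))) = 0 := by
          linear_combination (9*a 0^2*u + 3*a 0*a 1)*hu + (-3*a 0)*hP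
        have := (mul_eq_zero.mp key).resolve_left h9
        linear_combination this
      · have key : 27*a 0^2*(a 3 - u^2*1*(a 1 + 2*u*a 0)) = 0 := by
          linear_combination (-18*a 0^2*u^2 - 3*a 0*a 1*u + a 1^2)*hu + h33
        have h27 : (27:k)*a 0^2 ≠ 0 := by
          have h27' : (27:k) = 3^3 := by norm_num
          exact mul_ne_zero (h27' ▸ pow_ne_zero 3 hk3) (pow_ne_zero 2 h0)
        have := (mul_eq_zero.mp key).resolve_left h27
        linear_combination this
    · set P : k := a 1^2 - 3*a 0*a 2 with hP_def
      set N : k := 9*a 0*a 3 - a 1*a 2 with hN_def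
      set u : k := N/(2*P) with hu_def
      have hu2 : 2*P*u = N := by rw [hu_def]; field_simp; try ring
      have hP2 : (4:k)*P^2 ≠ 0 := by
        have h4' : (4:k) = 2^2 := by norm_num
        exact mul_ne_zero (h4' ▸ pow_ne_zero 2 hk2) (pow_ne_zero 2 hP)
      refine ⟨u, 1, a 0, a 1 + 2*u*a 0, by simp, by ring, by ring, ?_, ?_⟩
      · have key : 4*P^2*(a 2 - (u^2*a 0 - 2*u*1*(a 1 + 2*u*a 0))) = 0 := by
          rw [hP_def]
          linear_combination (-9*a 0)*hd' + (3*a 0*(2*P*u+N)+4*P*a 1)*hu2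
        have := (mul_eq_zero.mp key).resolve_left hP2
        linear_combination this
      · have key : 8*P^3*(a 3 - u^2*1*(a 1 + 2*u*a 0)) = 0 := by
          rw [hP_def]
          linear_combination (54*a 0^2*a 3 - 2*a 1^3)*hd'
            - (2*P*a 1*(N+2*P*u) + 2*a 0*(N^2+2*P*u*N+4*P^2*u^2))*hu2
        have hP3 : (8:k)*P^3 ≠ 0 := by
          have h8' : (8:k) = 2^3 := by norm_num
          exact mul_ne_zero (h8' ▸ pow_ne_zero 3 hk2) (pow_ne_zero 3 hP)
        have := (mul_eq_zero.mp key).resolve_left hP3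
        linear_combination this

theorem core_bwd (hk2 : (2:k) ≠ 0) (hk3 : (3:k) ≠ 0) (a b : Fin 4 → k)
    (ha0 : a 0 = 0) (ha1 : a 1 = 0) (hst : ¬(a 2 = 0 ∧ a 3 = 0))
    (hR : Rc a b = 0) (hH : Hc a b = 0) (hI : Ic a b = 0) :
    toForm k 3 a * toForm k 3 b = 0 ∨ ∃ u v : k, (u, v) ≠ (0, 0) ∧
      (C v * X 0 - C u * X 1)^4 ∣ toForm k 3 a * toForm k 3 b := by
  have hH' : 3*a 0*b 3 - a 1*b 2 + a 2*b 1 - 3*a 3*b 0 = 0 := hH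
  by_cases hb0 : b 0 = 0
  · by_cases hs : a 2 = 0
    · -- f = a3 Y^3, Y | g
      right
      refine ⟨-1, 0, by simp, C (a 3) * (C (b 1) * X 0^2 + C (b 2) * X 0 * X 1 + C (b 3) * X 1^2), ?_⟩
      rw [toForm3_expand, toForm3_expand, ha0, ha1, hs, hb0]
      simp only [map_zero, map_neg, map_one]
      ring
    · -- Y^2 | f, Y^2 | g
      have hb1 : b 1 = 0 := by
        have key : a 2 * b 1 = 0 := by
          linear_combination hH' - 3*b 3*ha0 + b 2*ha1 + 3*a 3*hb0
        exact (mul_eq_zero.mp key).resolve_left hs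
      right
      refine ⟨-1, 0, by simp,
        (C (a 2) * X 0 + C (a 3) * X 1) * (C (b 2) * X 0 + C (b 3) * X 1), ?_⟩
      rw [toForm3_expand, toForm3_expand, ha0, ha1, hb0, hb1]
      simp only [map_zero, map_neg, map_one]
      ring
  · -- b 0 ≠ 0 : forces g = c·(a2 X + a3 Y)^3
    have hI' : 228*a 0*b 0*a 3*b 3 - 52*a 1*b 0*a 3*b 2 - 24*a 1*b 0*a 2*b 3 - 24*a 0*b 1*a 3*b 2
      - 52*a 0*b 1*a 2*b 3 + 4*a 2*b 0*a 3*b 1 + 16*a 2^2*b 0*b 2 + 16*a 1*b 1^2*a 3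
      + 4*a 1*b 1*a 2*b 2 + 16*a 1^2*b 1*b 3 + 16*a 0*b 2^2*a 2 + 4*a 0*b 2*a 1*b 3
      - 6*a 3^2*b 0^2 - 6*a 2^2*b 1^2 - 6*a 1^2*b 2^2 - 6*a 0^2*b 3^2 = 0 := hI
    have hR' : 3*b 0^2*a 0*b 3*a 3^2 - b 0^3*a 3^3 + 2*b 0^2*a 3^2*b 2*a 1 - b 2^2*b 0*a 1^2*a 3
      - a 0^2*b 2^3*a 3 + b 0^2*a 2*b 1*a 3^2 - b 0^2*a 2^2*b 2*a 3 - b 1^2*b 0*a 1*a 3^2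
      + a 0*b 1^3*a 3^2 - 3*b 0*a 0^2*b 3^2*a 3 - b 0*a 1^3*b 3^2 + a 0^3*b 3^3
      + b 0^2*a 2^3*b 3 - b 0*a 0*b 3*b 2*a 1*a 3 + 3*a 0^2*b 3*b 2*b 1*a 3
      + b 0*a 3*b 3*a 0*b 1*a 2 + 3*b 0*a 0*b 3^2*a 1*a 2 - 2*a 0^2*b 3^2*b 1*a 2
      - 3*b 0*a 3^2*b 2*a 0*b 1 - 3*b 0^2*a 3*b 3*a 1*a 2 - b 2*a 1*a 0^2*b 3^2
      + b 2^2*a 1*a 0*b 1*a 3 + b 2*b 0*a 1^2*b 3*a 2 - b 2*a 1*b 3*a 0*b 1*a 2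
      + a 0^2*b 2^2*a 2*b 3 + 2*b 0*a 0*b 2^2*a 2*a 3 - 2*b 0*a 0*b 2*b 3*a 2^2
      - 2*b 1^2*a 1*a 3*a 0*b 3 + b 1*a 1^2*b 3^2*a 0 + 2*b 1*b 0*a 1^2*b 3*a 3
      + b 1*b 0*a 1*b 2*a 2*a 3 - b 1*b 0*a 1*b 3*a 2^2 - a 0*b 1^2*b 2*a 2*a 3
      + a 0*b 1^2*b 3*a 2^2 = 0 := hR
    have hs : a 2 ≠ 0 := by
      intro hs0
      have ht : a 3 * b 0 = 0 := by
        have h3b : 3*(a 3*b 0) = 0 := by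
          linear_combination -hH' + 3*b 3*ha0 - b 2*ha1 + b 1*hs0
        exact (mul_eq_zero.mp h3b).resolve_left hk3
      exact hst ⟨hs0, (mul_eq_zero.mp ht).resolve_right hb0⟩
    have e1c : a 2*b 1 - 3*a 3*b 0 = 0 := by
      linear_combination hH' - 3*b 3*ha0 + b 2*ha1
    -- clean I
    have hIc : 4*a 2*a 3*b 0*b 1 + 16*a 2^2*b 0*b 2 - 6*a 3^2*b 0^2 - 6*a 2^2*b 1^2 = 0 := by
      have h := hI'
      rw [ha0, ha1] at h
      linear_combination h
    have hb2' : a 2^2*b 2 - 3*a 3^2*b 0 = 0 := by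
      have k2 : (16*b 0*a 2^2)*(a 2^2*b 2 - 3*a 3^2*b 0) = 0 := by
        linear_combination a 2^2*hIc + (6*a 2^3*b 1 + 14*a 2^2*a 3*b 0)*e1c
      have h16 : (16:k)*b 0*a 2^2 ≠ 0 := by
        have h16' : (16:k) = 2^4 := by norm_num
        exact mul_ne_zero (mul_ne_zero (h16' ▸ pow_ne_zero 4 hk2) hb0) (pow_ne_zero 2 hs)
      exact (mul_eq_zero.mp k2).resolve_left h16
    have hparen : a 2^3*b 3 - a 2^2*a 3*b 2 + a 2*a 3^2*b 1 - a 3^3*b 0 = 0 := by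
      have h := hR'
      rw [ha0, ha1] at h
      have hsq : b 0^2*(a 2^3*b 3 - a 2^2*a 3*b 2 + a 2*a 3^2*b 1 - a 3^3*b 0) = 0 := by
        linear_combination h
      exact (mul_eq_zero.mp hsq).resolve_left (pow_ne_zero 2 hb0)
    have eb3 : a 2^3*b 3 = a 3^3*b 0 := by
      linear_combination hparen + a 3*hb2' - a 3^2*e1c
    have eb1 : a 2^3*b 1 = 3*a 2^2*a 3*b 0 := by linear_combination a 2^2*e1c
    have eb2 : a 2^3*b 2 = 3*a 2*a 3^2*b 0 := by linear_combination a 2*hb2'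
    -- polynomial-level versions
    have hC1 : (C (a 2^3*b 1) : MvPolynomial (Fin 2) k) = C (3*a 2^2*a 3*b 0) := congrArg _ eb1
    have hC2 : (C (a 2^3*b 2) : MvPolynomial (Fin 2) k) = C (3*a 2*a 3^2*b 0) := congrArg _ eb2
    have hC3 : (C (a 2^3*b 3) : MvPolynomial (Fin 2) k) = C (a 3^3*b 0) := congrArg _ eb3
    simp only [C_mul, C_pow, map_ofNat] at hC1 hC2 hC3
    have key : C (a 2^3) * (toForm k 3 a * toForm k 3 b)
        = (C (a 2) * X 0 + C (a 3) * X 1)^4 * (C (b 0) * X 1^2) := by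
      rw [toForm3_expand, toForm3_expand, ha0, ha1]
      simp only [map_zero, C_pow]
      linear_combination ((C (a 2)*X 0*X 1^2 + C (a 3)*X 1^3) * (X 0^2*X 1))*hC1
        + ((C (a 2)*X 0*X 1^2 + C (a 3)*X 1^3) * (X 0*X 1^2))*hC2
        + ((C (a 2)*X 0*X 1^2 + C (a 3)*X 1^3) * (X 1^3))*hC3
    right
    refine ⟨-(a 3), a 2, ?_, C ((a 2^3)⁻¹ * b 0) * X 1^2, ?_⟩
    · intro h
      exact hs (congrArg Prod.snd h)
    · apply mul_left_cancel₀ (show (C (a 2^3) : MvPolynomial (Fin 2) k) ≠ 0 by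
        rw [Ne, C_eq_zero]; exact pow_ne_zero 3 hs)
      rw [key, map_neg]
      have hCb : (C (a 2^3) : MvPolynomial (Fin 2) k) * C ((a 2^3)⁻¹ * b 0) = C (b 0) := by
        rw [← C_mul, show a 2^3 * ((a 2^3)⁻¹ * b 0) = b 0 from by field_simp]
      linear_combination (-((C (a 2) * X 0 + C (a 3) * X 1)^4 * X 1^2)) * hCb
theorem lin_compat (α β γ δ p q : k) :
    aeval ![C α * X 0 + C β * X 1, C γ * X 0 + C δ * X 1]
      ((C p * X 0 - C q * X 1 : MvPolynomial (Fin 2) k))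
      = (C (p*α - q*γ) * X 0 + C (p*β - q*δ) * X 1 : MvPolynomial (Fin 2) k) := by
  simp only [map_sub, map_mul, map_add, aeval_X, aeval_C, algebraMap_eq,
    Matrix.cons_val_zero, Matrix.cons_val_one, Matrix.head_cons, C_mul, C_sub]
  ring

theorem main_bwd (hk2 : (2:k) ≠ 0) (hk3 : (3:k) ≠ 0) (a b : Fin 4 → k)
    (hd : discCubic a = 0) (hR : Rc a b = 0) (hH : Hc a b = 0) (hI : Ic a b = 0) :
    toForm k 3 a * toForm k 3 b = 0 ∨ ∃ u v : k, (u, v) ≠ (0, 0) ∧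
      (C v * X 0 - C u * X 1)^4 ∣ toForm k 3 a * toForm k 3 b := by
  by_cases hA : ∀ i, a i = 0
  · left; rw [toForm3_zero_of a hA, zero_mul]
  obtain ⟨u, v, s, t, huv, e0, e1, e2, e3⟩ := L1 hk2 hk3 a hd
  have hst : ¬(s = 0 ∧ t = 0) := by
    rintro ⟨hs, ht⟩
    apply hA
    have g0 : a 0 = 0 := by rw [e0, hs]; ring
    have g1 : a 1 = 0 := by rw [e1, hs, ht]; ring
    have g2 : a 2 = 0 := by rw [e2, hs, ht]; ring
    have g3 : a 3 = 0 := by rw [e3, ht]; ring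
    intro i
    fin_cases i
    · exact g0
    · exact g1
    · exact g2
    · exact g3
  by_cases hv : v = 0
  · have hu : u ≠ 0 := fun h => huv ⟨h, hv⟩
    have ha0 : a 0 = 0 := by rw [e0, hv]; ring
    have ha1 : a 1 = 0 := by rw [e1, hv]; ring
    have hst2 : ¬(a 2 = 0 ∧ a 3 = 0) := by
      rintro ⟨p2, p3⟩
      rw [e2, hv] at p2
      rw [e3] at p3
      apply hst
      constructor
      · have hs2 : u^2*s = 0 := by linear_combination p2
        exact (mul_eq_zero.mp hs2).resolve_left (pow_ne_zero 2 hu)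
      · exact (mul_eq_zero.mp p3).resolve_left (pow_ne_zero 2 hu)
    exact core_bwd hk2 hk3 a b ha0 ha1 hst2 hR hH hI
  · -- v ≠ 0 : normalize so the double root is at [1:0]
    have hA0 : actG u (-1) v 0 a 0 = 0 := by
      simp only [actG, Matrix.cons_val_zero]
      rw [e0, e1, e2, e3]; ring
    have hA1 : actG u (-1) v 0 a 1 = 0 := by
      simp only [actG, Matrix.cons_val_one, Matrix.head_cons, Matrix.cons_val_zero]
      rw [e0, e1, e2, e3]; ring
    have hA2 : actG u (-1) v 0 a 2 = v^2*(u*s + v*t) := by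
      simp only [actG, Matrix.cons_val_two, Matrix.tail_cons, Matrix.head_cons]
      rw [e0, e1, e2, e3]; ring
    have hA3 : actG u (-1) v 0 a 3 = -(v^2*s) := by
      simp only [actG, Matrix.cons_val_three, Matrix.tail_cons, Matrix.head_cons]
      rw [e0, e1, e2, e3]; ring
    have hst2 : ¬(actG u (-1) v 0 a 2 = 0 ∧ actG u (-1) v 0 a 3 = 0) := by
      rintro ⟨p2, p3⟩
      rw [hA2] at p2
      rw [hA3] at p3
      have hs0 : s = 0 := by
        have := neg_eq_zero.mp p3
        exact (mul_eq_zero.mp this).resolve_left (pow_ne_zero 2 hv)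
      have ht0 : t = 0 := by
        have h1 := (mul_eq_zero.mp p2).resolve_left (pow_ne_zero 2 hv)
        rw [hs0] at h1
        have h2' : v*t = 0 := by linear_combination h1
        exact (mul_eq_zero.mp h2').resolve_left hv
      exact hst ⟨hs0, ht0⟩
    have hRA : Rc (actG u (-1) v 0 a) (actG u (-1) v 0 b) = 0 := by
      rw [invR, hR, mul_zero]
    have hHA : Hc (actG u (-1) v 0 a) (actG u (-1) v 0 b) = 0 := by
      rw [invH, hH, mul_zero]
    have hIA : Ic (actG u (-1) v 0 a) (actG u (-1) v 0 b) = 0 := by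
      rw [invI, hI, mul_zero]
    have hΦA : aeval ![C 0 * X 0 + C v⁻¹ * X 1, C (-1) * X 0 + C (u*v⁻¹) * X 1]
        (toForm k 3 (actG u (-1) v 0 a)) = toForm k 3 a := by
      rw [compat, actG_inv u v hv]
    have hΦB : aeval ![C 0 * X 0 + C v⁻¹ * X 1, C (-1) * X 0 + C (u*v⁻¹) * X 1]
        (toForm k 3 (actG u (-1) v 0 b)) = toForm k 3 b := by
      rw [compat, actG_inv u v hv]
    rcases core_bwd hk2 hk3 (actG u (-1) v 0 a) (actG u (-1) v 0 b) hA0 hA1 hst2 hRA hHA hIA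
      with hz | ⟨u', v', huv', q, hq⟩
    · left
      rw [← hΦA, ← hΦB, ← map_mul, hz, map_zero]
    · right
      refine ⟨(u'*u - v')*v⁻¹, u', ?_,
        aeval ![C 0 * X 0 + C v⁻¹ * X 1, C (-1) * X 0 + C (u*v⁻¹) * X 1] q, ?_⟩
      swap
      · rw [← hΦA, ← hΦB, ← map_mul, hq, map_mul, map_pow, lin_compat,
          show v'*0 - u'*(-1) = u' from by ring,
          show v'*v⁻¹ - u'*(u*v⁻¹) = -((u'*u - v')*v⁻¹) from by ring, map_neg]
        ring
      intro h
      have h1 : (u'*u - v')*v⁻¹ = 0 := congrArg Prod.fst h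
      have h2 : u' = 0 := congrArg Prod.snd h
      apply huv'
      rw [h2] at h1
      have h3' : v' * v⁻¹ = 0 := by linear_combination -h1
      have hv' : v' = 0 := (mul_eq_zero.mp h3').resolve_right (inv_ne_zero hv)
      rw [h2, hv']
end CubicAux

open CubicAux in
/-- For binary cubics `f, g`: `fg = 0` or `fg` has a root of multiplicity at least 4
iff the invariants `D, R, H, I` all vanish on `(f,g)`. -/
theorem cubic_pair_null_condition
    (k : Type*) [Field k] [IsAlgClosed k]
    (h2 : (2 : k) ≠ 0) (h3 : (3 : k) ≠ 0)
    (a b : Fin 4 → k) :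
    (toForm k 3 a * toForm k 3 b = 0 ∨
      ∃ u v : k, (u, v) ≠ (0, 0) ∧
        (MvPolynomial.C v * MvPolynomial.X 0 - MvPolynomial.C u * MvPolynomial.X 1)^4 ∣
          toForm k 3 a * toForm k 3 b) ↔
    (Dc a b = 0 ∧ Rc a b = 0 ∧ Hc a b = 0 ∧ Ic a b = 0) := by
  constructor
  · rintro (hz | ⟨u, v, huv, hdvd⟩)
    · rcases mul_eq_zero.mp hz with h | h
      · have h' := toForm3_zero h
        refine ⟨?_, ?_, ?_, ?_⟩ <;>
          (simp only [Dc, discCubic, Rc, Hc, Ic, h' 0, h' 1, h' 2, h' 3]; ring)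
      · have h' := toForm3_zero h
        refine ⟨?_, ?_, ?_, ?_⟩ <;>
          (simp only [Dc, discCubic, Rc, Hc, Ic, h' 0, h' 1, h' 2, h' 3]; ring)
    · by_cases hv : v = 0
      · obtain ⟨q, hq⟩ := hdvd
        have hX : (X 1 : MvPolynomial (Fin 2) k)^4 ∣ toForm k 3 a * toForm k 3 b := by
          refine ⟨(C u)^4 * q, ?_⟩
          rw [hq, hv, map_zero]
          ring
        obtain ⟨hc0, hc1, hc2, hc3⟩ := conv_zero a b hX
        exact core_fwd a b hc0 hc1 hc2 hc3
      · obtain ⟨q, hq⟩ := hdvd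
        have step : aeval (![C u * X 0 + C (-1) * X 1, C v * X 0 + C 0 * X 1] : Fin 2 → MvPolynomial (Fin 2) k)
            (toForm k 3 a * toForm k 3 b)
            = aeval (![C u * X 0 + C (-1) * X 1, C v * X 0 + C 0 * X 1] : Fin 2 → MvPolynomial (Fin 2) k)
              ((C v * X 0 - C u * X 1)^4 * q) := by rw [hq]
        rw [map_mul, compat, compat, map_mul, map_pow, lin_compat] at step
        have hX : (X 1 : MvPolynomial (Fin 2) k)^4
            ∣ toForm k 3 (actG u (-1) v 0 a) * toForm k 3 (actG u (-1) v 0 b) := by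
          refine ⟨(C (-v))^4 * aeval (![C u * X 0 + C (-1) * X 1, C v * X 0 + C 0 * X 1] : Fin 2 → MvPolynomial (Fin 2) k) q, ?_⟩
          rw [step, show v*u - u*v = (0:k) from by ring,
            show v*(-1) - u*0 = -v from by ring, map_zero]
          ring
        obtain ⟨hc0, hc1, hc2, hc3⟩ := conv_zero _ _ hX
        obtain ⟨hdA, hrA, hhA, hiA⟩ := core_fwd _ _ hc0 hc1 hc2 hc3
        rw [invD] at hdA
        rw [invR] at hrA
        rw [invH] at hhA
        rw [invI] at hiA
        exact ⟨(mul_eq_zero.mp hdA).resolve_left (pow_ne_zero 12 hv),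
          (mul_eq_zero.mp hrA).resolve_left (pow_ne_zero 9 hv),
          (mul_eq_zero.mp hhA).resolve_left (pow_ne_zero 3 hv),
          (mul_eq_zero.mp hiA).resolve_left (pow_ne_zero 6 hv)⟩
  · rintro ⟨hD, hR, hH, hI⟩
    have hD' : discCubic a * discCubic b = 0 := hD
    rcases mul_eq_zero.mp hD' with hda | hdb
    · exact main_bwd h2 h3 a b hda hR hH hI
    · have hR' : Rc b a = 0 := by rw [Rc_swap b a, hR, neg_zero]
      have hH' : Hc b a = 0 := by rw [Hc_swap b a, hH, neg_zero]
      have hI' : Ic b a = 0 := by rw [Ic_swap b a, hI]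
      have res := main_bwd h2 h3 b a hdb hR' hH' hI'
      rw [mul_comm (toForm k 3 b) (toForm k 3 a)] at res
      exact res
end
end

section
/- The ring S = k[V_1,...,V_6], where V_1 = IH/R, V_2 = H^3/R, V_3 = H^4/D, V_4 = I^2/D, V_5 = I^3/R^2, V_6 = IH^2/D, with H, I, R, D algebraically independent over k, is integrally closed in its field of fractions. -/
/-- The `k`-algebra generated by the absolute invariants `V₁, …, V₆` of pairs of
binary cubics. -/
noncomputable def Vring (k F : Type*) [Field k] [Field F] [Algebra k F]
    (H I R D : F) : Subalgebra k F :=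
  Algebra.adjoin k ({I * H / R, H^3 / R, H^4 / D, I^2 / D, I^3 / R^2,
    I * H^2 / D} : Set F)

namespace VAux

open MvPolynomial

/-- The weight vector. -/
private def w4 : Fin 4 → ℤ := ![1, 2, -3, -4]

variable {k F : Type*} [Field k] [Field F] [Algebra k F]

private lemma weight_eval (s : Fin 4 →₀ ℕ) :
    Finsupp.weight w4 s = (s 0 : ℤ) + 2 * s 1 - 3 * s 2 - 4 * s 3 := by
  rw [Finsupp.weight_apply, Finsupp.sum_fintype _ _ (by intro i; simp), Fin.sum_univ_four]
  simp [w4, smul_eq_mul]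
  ring

private lemma aeval_mono (x : Fin 4 → F) (s : Fin 4 →₀ ℕ) (c : k) :
    aeval x (monomial s c)
      = algebraMap k F c * (x 0 ^ s 0 * x 1 ^ s 1 * x 2 ^ s 2 * x 3 ^ s 3) := by
  rw [aeval_monomial, Finsupp.prod_pow, Fin.prod_univ_four]

variable (H I R D : F)

private lemma mono_mem (hR : R ≠ 0) (hD : D ≠ 0) :
    ∀ N a b c d : ℕ, a + b + c + d ≤ N → a + 2*b = 3*c + 4*d →
      H ^ a * I ^ b * R⁻¹ ^ c * D⁻¹ ^ d ∈ Vring k F H I R D := by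
  have g1 : I * H / R ∈ Vring k F H I R D := Algebra.subset_adjoin (by simp)
  have g2 : H^3 / R ∈ Vring k F H I R D := Algebra.subset_adjoin (by simp)
  have g3 : H^4 / D ∈ Vring k F H I R D := Algebra.subset_adjoin (by simp)
  have g4 : I^2 / D ∈ Vring k F H I R D := Algebra.subset_adjoin (by simp)
  have g5 : I^3 / R^2 ∈ Vring k F H I R D := Algebra.subset_adjoin (by simp)
  have g6 : I * H^2 / D ∈ Vring k F H I R D := Algebra.subset_adjoin (by simp)
  intro N
  induction N with
  | zero =>
    intro a b c d hle heq
    obtain rfl : a = 0 := by omega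
    obtain rfl : b = 0 := by omega
    obtain rfl : c = 0 := by omega
    obtain rfl : d = 0 := by omega
    simpa using one_mem (Vring k F H I R D)
  | succ N ih =>
    intro a b c d hle heq
    rcases d with _ | d
    · rcases c with _ | c
      · obtain rfl : a = 0 := by omega
        obtain rfl : b = 0 := by omega
        simpa using one_mem (Vring k F H I R D)
      · rcases b with _ | b
        · -- b = 0 : use V2 = H^3/R
          obtain ⟨a', rfl⟩ : ∃ a', a = a' + 3 := ⟨a - 3, by omega⟩
          show H ^ (a' + 3) * I ^ 0 * R⁻¹ ^ (c + 1) * D⁻¹ ^ 0 ∈ Vring k F H I R D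
          have key : H ^ (a' + 3) * I ^ 0 * R⁻¹ ^ (c + 1) * D⁻¹ ^ 0
              = (H^3 / R) * (H ^ a' * I ^ 0 * R⁻¹ ^ c * D⁻¹ ^ 0) := by
            rw [div_eq_mul_inv]; ring
          rw [key]
          exact mul_mem g2 (ih a' 0 c 0 (by omega) (by omega))
        · rcases Nat.eq_zero_or_pos a with rfl | ha
          · -- a = 0 : use V5 = I^3/R^2
            obtain ⟨b', rfl⟩ : ∃ b', b = b' + 2 := ⟨b - 2, by omega⟩
            obtain ⟨c', rfl⟩ : ∃ c', c = c' + 1 := ⟨c - 1, by omega⟩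
            show H ^ 0 * I ^ (b' + 3) * R⁻¹ ^ (c' + 2) * D⁻¹ ^ 0 ∈ Vring k F H I R D
            have key : H ^ 0 * I ^ (b' + 3) * R⁻¹ ^ (c' + 2) * D⁻¹ ^ 0
                = (I^3 / R^2) * (H ^ 0 * I ^ b' * R⁻¹ ^ c' * D⁻¹ ^ 0) := by
              rw [div_eq_mul_inv, ← inv_pow]; ring
            rw [key]
            exact mul_mem g5 (ih 0 b' c' 0 (by omega) (by omega))
          · -- a ≥ 1 : use V1 = I*H/R
            obtain ⟨a', rfl⟩ : ∃ a', a = a' + 1 := ⟨a - 1, by omega⟩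
            show H ^ (a' + 1) * I ^ (b + 1) * R⁻¹ ^ (c + 1) * D⁻¹ ^ 0 ∈ Vring k F H I R D
            have key : H ^ (a' + 1) * I ^ (b + 1) * R⁻¹ ^ (c + 1) * D⁻¹ ^ 0
                = (I * H / R) * (H ^ a' * I ^ b * R⁻¹ ^ c * D⁻¹ ^ 0) := by
              rw [div_eq_mul_inv]; ring
            rw [key]
            exact mul_mem g1 (ih a' b c 0 (by omega) (by omega))
    · rcases b with _ | _ | b
      · -- b = 0 : use V3 = H^4/D
        obtain ⟨a', rfl⟩ : ∃ a', a = a' + 4 := ⟨a - 4, by omega⟩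
        show H ^ (a' + 4) * I ^ 0 * R⁻¹ ^ c * D⁻¹ ^ (d + 1) ∈ Vring k F H I R D
        have key : H ^ (a' + 4) * I ^ 0 * R⁻¹ ^ c * D⁻¹ ^ (d + 1)
            = (H^4 / D) * (H ^ a' * I ^ 0 * R⁻¹ ^ c * D⁻¹ ^ d) := by
          rw [div_eq_mul_inv]; ring
        rw [key]
        exact mul_mem g3 (ih a' 0 c d (by omega) (by omega))
      · -- b = 1 : use V6 = I*H^2/D
        obtain ⟨a', rfl⟩ : ∃ a', a = a' + 2 := ⟨a - 2, by omega⟩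
        show H ^ (a' + 2) * I ^ 1 * R⁻¹ ^ c * D⁻¹ ^ (d + 1) ∈ Vring k F H I R D
        have key : H ^ (a' + 2) * I ^ 1 * R⁻¹ ^ c * D⁻¹ ^ (d + 1)
            = (I * H^2 / D) * (H ^ a' * I ^ 0 * R⁻¹ ^ c * D⁻¹ ^ d) := by
          rw [div_eq_mul_inv]; ring
        rw [key]
        exact mul_mem g6 (ih a' 0 c d (by omega) (by omega))
      · -- b ≥ 2 : use V4 = I^2/D
        show H ^ a * I ^ (b + 2) * R⁻¹ ^ c * D⁻¹ ^ (d + 1) ∈ Vring k F H I R D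
        have key : H ^ a * I ^ (b + 2) * R⁻¹ ^ c * D⁻¹ ^ (d + 1)
            = (I^2 / D) * (H ^ a * I ^ b * R⁻¹ ^ c * D⁻¹ ^ d) := by
          rw [div_eq_mul_inv]; ring
        rw [key]
        exact mul_mem g4 (ih a b c d (by omega) (by omega))

private lemma hom0_mem (hR : R ≠ 0) (hD : D ≠ 0) {p : MvPolynomial (Fin 4) k}
    (hp : p.IsWeightedHomogeneous w4 0) :
    aeval ![H, I, R⁻¹, D⁻¹] p ∈ Vring k F H I R D := by
  rw [p.as_sum, map_sum]
  apply sum_mem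
  intro s hs
  have hw := hp (mem_support_iff.mp hs)
  rw [weight_eval] at hw
  rw [aeval_mono]
  show algebraMap k F _ * (H ^ s 0 * I ^ s 1 * R⁻¹ ^ s 2 * D⁻¹ ^ s 3) ∈ _
  exact mul_mem (Subalgebra.algebraMap_mem _ _)
    (mono_mem H I R D hR hD (s 0 + s 1 + s 2 + s 3) (s 0) (s 1) (s 2) (s 3) le_rfl (by omega))

private lemma gen_rep (a b c d : ℕ) (h : (a:ℤ) + 2*b - 3*c - 4*d = 0) (v : F)
    (hvv : H ^ a * I ^ b * R⁻¹ ^ c * D⁻¹ ^ d = v) :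
    ∃ p : MvPolynomial (Fin 4) k, p.IsWeightedHomogeneous w4 0 ∧
      aeval ![H, I, R⁻¹, D⁻¹] p = v := by
  refine ⟨monomial (Finsupp.equivFunOnFinite.symm ![a, b, c, d]) 1, ?_, ?_⟩
  · apply isWeightedHomogeneous_monomial
    rw [weight_eval]
    exact h
  · rw [aeval_mono, map_one, one_mul, ← hvv]
    rfl

private lemma exists_rep {u : F} (hu : u ∈ Vring k F H I R D) :
    ∃ p : MvPolynomial (Fin 4) k, p.IsWeightedHomogeneous w4 0 ∧
      aeval ![H, I, R⁻¹, D⁻¹] p = u := by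
  have hu' : u ∈ Algebra.adjoin k ({I * H / R, H^3 / R, H^4 / D, I^2 / D, I^3 / R^2,
      I * H^2 / D} : Set F) := hu
  clear hu
  induction hu' using Algebra.adjoin_induction with
  | mem x hx =>
    simp only [Set.mem_insert_iff, Set.mem_singleton_iff] at hx
    rcases hx with rfl | rfl | rfl | rfl | rfl | rfl
    · exact gen_rep H I R D 1 1 1 0 (by norm_num) _ (by rw [div_eq_mul_inv]; ring)
    · exact gen_rep H I R D 3 0 1 0 (by norm_num) _ (by rw [div_eq_mul_inv]; ring)
    · exact gen_rep H I R D 4 0 0 1 (by norm_num) _ (by rw [div_eq_mul_inv]; ring)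
    · exact gen_rep H I R D 0 2 0 1 (by norm_num) _ (by rw [div_eq_mul_inv]; ring)
    · exact gen_rep H I R D 0 3 2 0 (by norm_num) _
        (by rw [div_eq_mul_inv, ← inv_pow]; ring)
    · exact gen_rep H I R D 2 1 0 1 (by norm_num) _ (by rw [div_eq_mul_inv]; ring)
  | algebraMap r => exact ⟨C r, isWeightedHomogeneous_C _ _, aeval_C _ _⟩
  | add x y hx hy ihx ihy =>
    obtain ⟨px, hpx, hex⟩ := ihx
    obtain ⟨py, hpy, hey⟩ := ihy
    exact ⟨px + py, (mem_weightedHomogeneousSubmodule k w4 0 (px + py)).mp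
      (Submodule.add_mem _ ((mem_weightedHomogeneousSubmodule k w4 0 px).mpr hpx)
        ((mem_weightedHomogeneousSubmodule k w4 0 py).mpr hpy)), by rw [map_add, hex, hey]⟩
  | mul x y hx hy ihx ihy =>
    obtain ⟨px, hpx, hex⟩ := ihx
    obtain ⟨py, hpy, hey⟩ := ihy
    exact ⟨px * py, (zero_add (0:ℤ)) ▸ hpx.mul hpy, by rw [map_mul, hex, hey]⟩

private lemma wHC_mul {w : Fin 4 → ℤ} (n : ℤ) (p q : MvPolynomial (Fin 4) k)
    (hq : q.IsWeightedHomogeneous w 0) :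
    weightedHomogeneousComponent w n (p * q)
      = (weightedHomogeneousComponent w n p) * q := by
  classical
  ext d
  rw [coeff_weightedHomogeneousComponent, coeff_mul, coeff_mul]
  split_ifs with hd
  · refine Finset.sum_congr rfl fun x hx => ?_
    rw [coeff_weightedHomogeneousComponent]
    by_cases hv : coeff x.2 q = 0
    · rw [hv, mul_zero, mul_zero]
    · have hxd : x.1 + x.2 = d := Finset.HasAntidiagonal.mem_antidiagonal.mp hx
      have h2 : Finsupp.weight w x.2 = 0 := hq hv
      have hw : Finsupp.weight w x.1 = n := by
        have : Finsupp.weight w d = Finsupp.weight w x.1 + Finsupp.weight w x.2 := by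
          rw [← hxd, map_add]
        rw [h2, add_zero] at this
        rw [← this, hd]
      rw [if_pos hw]
  · symm
    refine Finset.sum_eq_zero fun x hx => ?_
    rw [coeff_weightedHomogeneousComponent]
    by_cases hv : coeff x.2 q = 0
    · rw [hv, mul_zero]
    · have hxd : x.1 + x.2 = d := Finset.HasAntidiagonal.mem_antidiagonal.mp hx
      have h2 : Finsupp.weight w x.2 = 0 := hq hv
      have hw : Finsupp.weight w x.1 ≠ n := by
        intro hc
        apply hd
        rw [← hxd, map_add, h2, add_zero, hc]
      rw [if_neg hw, zero_mul]

private lemma hom_of_mul {w : Fin 4 → ℤ} {p q r : MvPolynomial (Fin 4) k}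
    (hq : q.IsWeightedHomogeneous w 0) (hr : r.IsWeightedHomogeneous w 0)
    (hq0 : q ≠ 0) (h : p * q = r) : p.IsWeightedHomogeneous w 0 := by
  classical
  intro d hd
  by_contra hn
  have h1 : weightedHomogeneousComponent w (Finsupp.weight w d) p * q = 0 := by
    rw [← wHC_mul _ p q hq, h, hr.weightedHomogeneousComponent_ne _ hn]
  rcases mul_eq_zero.mp h1 with h2 | h2
  · have h3 := coeff_weightedHomogeneousComponent (w := w) (Finsupp.weight w d) p d
    rw [h2, if_pos rfl, coeff_zero] at h3
    exact hd h3.symm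
  · exact hq0 h2

private lemma integral_mono {S T : Subalgebra k F} (h : S ≤ T) {u : F}
    (hu : IsIntegral S u) : IsIntegral T u := by
  obtain ⟨f, hf, hev⟩ := hu
  refine ⟨f.map (Subalgebra.inclusion h).toRingHom, hf.map _, ?_⟩
  rw [Polynomial.eval₂_map]
  have : (algebraMap T F).comp (Subalgebra.inclusion h).toRingHom = algebraMap S F :=
    RingHom.ext fun a => rfl
  rw [this]
  exact hev

private lemma mem_of_int_frac (B : Subalgebra k F) [IsIntegrallyClosed B]
    {u : F} (p q : B) (hq : (q : F) ≠ 0) (hu : u * q = p) (hint : IsIntegral B u) :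
    u ∈ B := by
  have hinj : Function.Injective (algebraMap B F) := Subtype.val_injective
  set K := FractionRing B
  let φ : K →+* F := IsFractionRing.lift hinj
  let ψ : K →ₐ[B] F :=
    { toRingHom := φ, commutes' := fun b => IsFractionRing.lift_algebraMap hinj b }
  have hψinj : Function.Injective ψ := φ.injective
  set v : K := algebraMap B K p / algebraMap B K q with hv
  have hφv : ψ v = u := by
    show φ v = u
    rw [hv, map_div₀, IsFractionRing.lift_algebraMap, IsFractionRing.lift_algebraMap]
    rw [show (algebraMap (↥B) F) p = (p : F) from rfl, show (algebraMap (↥B) F) q = (q : F) from rfl]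
    rw [eq_comm, eq_div_iff hq]
    exact hu
  have hVint : IsIntegral B v :=
    (isIntegral_algHom_iff ψ hψinj).mp (by rw [hφv]; exact hint)
  obtain ⟨b, hb⟩ := IsIntegrallyClosed.isIntegral_iff.mp hVint
  have : u = (b : F) := by
    rw [← hφv, ← hb]
    exact IsFractionRing.lift_algebraMap (K := K) hinj b
  rw [this]
  exact b.2

private lemma indep_inv (hR : R ≠ 0) (hD : D ≠ 0)
    (hind : AlgebraicIndependent k ![H, I, R, D]) :
    AlgebraicIndependent k ![H, I, R⁻¹, D⁻¹] := by
  rw [algebraicIndependent_iff]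
  intro p hp
  set m := p.support.sup (fun s => max (s 2) (s 3)) with hm
  have hbound : ∀ s ∈ p.support, s 2 ≤ m ∧ s 3 ≤ m := fun s hs =>
    ⟨le_trans (le_max_left (s 2) (s 3))
        (Finset.le_sup (f := fun s => max (s 2) (s 3)) hs),
     le_trans (le_max_right (s 2) (s 3))
        (Finset.le_sup (f := fun s => max (s 2) (s 3)) hs)⟩
  set flip : (Fin 4 →₀ ℕ) → (Fin 4 →₀ ℕ) :=
    fun s => Finsupp.equivFunOnFinite.symm ![s 0, s 1, m - s 2, m - s 3] with hflip
  set q : MvPolynomial (Fin 4) k := ∑ s ∈ p.support, monomial (flip s) (coeff s p)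
    with hqdef
  have hkey : aeval ![H, I, R, D] q = R ^ m * D ^ m * aeval ![H, I, R⁻¹, D⁻¹] p := by
    rw [hqdef, map_sum]
    conv_rhs => rw [p.as_sum, map_sum, Finset.mul_sum]
    refine Finset.sum_congr rfl fun s hs => ?_
    rw [aeval_mono, aeval_mono]
    obtain ⟨h2, h3⟩ := hbound s hs
    have e2 : R ^ m * (R⁻¹) ^ (s 2) = R ^ (m - s 2) := by
      rw [inv_pow, eq_comm]
      exact pow_sub₀ R hR h2
    have e3 : D ^ m * (D⁻¹) ^ (s 3) = D ^ (m - s 3) := by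
      rw [inv_pow, eq_comm]
      exact pow_sub₀ D hD h3
    show algebraMap k F (coeff s p) * (H ^ (flip s) 0 * I ^ (flip s) 1 *
        R ^ (flip s) 2 * D ^ (flip s) 3)
      = R ^ m * D ^ m * (algebraMap k F (coeff s p) *
        (H ^ s 0 * I ^ s 1 * R⁻¹ ^ s 2 * D⁻¹ ^ s 3))
    rw [show (flip s) 0 = s 0 from rfl, show (flip s) 1 = s 1 from rfl,
      show (flip s) 2 = m - s 2 from rfl, show (flip s) 3 = m - s 3 from rfl,
      ← e2, ← e3]
    ring
  rw [hp, mul_zero] at hkey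
  have hq0 : q = 0 := algebraicIndependent_iff.mp hind q hkey
  by_contra hp0
  obtain ⟨s, hs⟩ := MvPolynomial.support_nonempty.mpr hp0
  have hinj : ∀ t ∈ p.support, flip t = flip s → t = s := by
    intro t ht hts
    obtain ⟨ht2, ht3⟩ := hbound t ht
    obtain ⟨hs2, hs3⟩ := hbound s hs
    have hv : ∀ i, (![(t 0 : ℕ), t 1, m - t 2, m - t 3]) i
        = (![(s 0 : ℕ), s 1, m - s 2, m - s 3]) i := by
      intro i
      have := DFunLike.congr_fun hts i
      exact this
    have h0 : t 0 = s 0 := hv 0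
    have h1 : t 1 = s 1 := hv 1
    have h2 : m - t 2 = m - s 2 := hv 2
    have h3 : m - t 3 = m - s 3 := hv 3
    ext i
    fin_cases i
    · exact h0
    · exact h1
    · show t 2 = s 2
      omega
    · show t 3 = s 3; omega
  have hcoeff : coeff (flip s) q = coeff s p := by
    rw [hqdef, coeff_sum]
    rw [Finset.sum_eq_single s]
    · rw [coeff_monomial, if_pos rfl]
    · intro t ht hts
      rw [coeff_monomial, if_neg (fun hh => hts (hinj t ht hh))]
    · intro h; exact absurd hs h
  rw [hq0, coeff_zero] at hcoeff
  exact (mem_support_iff.mp hs) hcoeff.symm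

end VAux

set_option maxHeartbeats 1000000 in
set_option synthInstance.maxHeartbeats 400000 in
/-- The ring `S = k[V₁, …, V₆]` is integrally closed in its field of fractions. -/
theorem V_algebra_integrally_closed
    (k F : Type*) [Field k] [Field F] [Algebra k F]
    (H I R D : F)
    (hind : AlgebraicIndependent k ![H, I, R, D]) :
    ∀ u : F,
      (∃ s₁ ∈ Vring k F H I R D, ∃ s₂ ∈ Vring k F H I R D, s₂ ≠ 0 ∧ u * s₂ = s₁) →
      IsIntegral (Vring k F H I R D) u →
      u ∈ Vring k F H I R D := by
  intro u hfrac hint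
  obtain ⟨s₁, hs₁, s₂, hs₂, hs₂0, huv⟩ := hfrac
  have hinj4 := algebraicIndependent_iff.mp hind
  have hR : R ≠ 0 := by
    intro h
    exact MvPolynomial.X_ne_zero (R := k) (σ := Fin 4) 2
      (hinj4 (MvPolynomial.X 2) (by rw [MvPolynomial.aeval_X]; exact h))
  have hD : D ≠ 0 := by
    intro h
    exact MvPolynomial.X_ne_zero (R := k) (σ := Fin 4) 3
      (hinj4 (MvPolynomial.X 3) (by rw [MvPolynomial.aeval_X]; exact h))
  have hind' := VAux.indep_inv H I R D hR hD hind
  set B := Algebra.adjoin k (Set.range ![H, I, R⁻¹, D⁻¹]) with hB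
  have hSB : Vring k F H I R D ≤ B := by
    apply Algebra.adjoin_le
    have hH : H ∈ B := Algebra.subset_adjoin ⟨0, rfl⟩
    have hI : I ∈ B := Algebra.subset_adjoin ⟨1, rfl⟩
    have hRi : R⁻¹ ∈ B := Algebra.subset_adjoin ⟨2, rfl⟩
    have hDi : D⁻¹ ∈ B := Algebra.subset_adjoin ⟨3, rfl⟩
    rintro v hv
    simp only [Set.mem_insert_iff, Set.mem_singleton_iff] at hv
    rcases hv with rfl | rfl | rfl | rfl | rfl | rfl
    · rw [div_eq_mul_inv]; exact mul_mem (mul_mem hI hH) hRi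
    · rw [div_eq_mul_inv]; exact mul_mem (pow_mem hH 3) hRi
    · rw [div_eq_mul_inv]; exact mul_mem (pow_mem hH 4) hDi
    · rw [div_eq_mul_inv]; exact mul_mem (pow_mem hI 2) hDi
    · rw [div_eq_mul_inv, ← inv_pow]; exact mul_mem (pow_mem hI 3) (pow_mem hRi 2)
    · rw [div_eq_mul_inv]; exact mul_mem (mul_mem hI (pow_mem hH 2)) hDi
  haveI : UniqueFactorizationMonoid B :=
    (hind'.aevalEquiv).toMulEquiv.uniqueFactorizationMonoid inferInstance
  have hu : u ∈ B :=
    VAux.mem_of_int_frac B ⟨s₁, hSB hs₁⟩ ⟨s₂, hSB hs₂⟩ hs₂0 huv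
      (VAux.integral_mono hSB hint)
  have hu' : u ∈ (MvPolynomial.aeval (R := k) ![H, I, R⁻¹, D⁻¹]).range := by
    rwa [← Algebra.adjoin_range_eq_range_aeval]
  obtain ⟨p, hp0⟩ := hu'
  have hp : (MvPolynomial.aeval (R := k) ![H, I, R⁻¹, D⁻¹]) p = u := hp0
  obtain ⟨r, hrh, hre⟩ := VAux.exists_rep H I R D hs₁
  obtain ⟨q, hqh, hqe⟩ := VAux.exists_rep H I R D hs₂
  have hq0 : q ≠ 0 := fun h => hs₂0 (by rw [← hqe, h, map_zero])
  have hpq : p * q = r := hind' (by rw [map_mul, hp, hqe, hre]; exact huv)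
  have hph : p.IsWeightedHomogeneous VAux.w4 0 := VAux.hom_of_mul hqh hrh hq0 hpq
  rw [← hp]
  exact VAux.hom0_mem H I R D hR hD hph
end
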